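/- arXiv:2408.06817 — 7 statements merged into one kernel-verified Lean document; each statement's English description precedes it below -/
import Mathlib

section
/- Let p be a prime. Then F_p(n) = ∑_{j=0}^{p-1} (p-j) · F_p(⌊(n+j)/p⌋) for every integer n ≥ 0, and F_p(j) = C(j+1, 2) = j(j+1)/2 for every j with 0 ≤ j ≤ p-1. -/
/-- `Fcount p n` = number of binomial coefficients `C(m,k)`, `0 ≤ k ≤ m < n`,
not divisible by `p`. -/
def Fcount (p n : ℕ) : ℕ :=
  ((Finset.range n ×ˢ Finset.range n).filter
    (fun mk => mk.2 ≤ mk.1 ∧ ¬ (p ∣ Nat.choose mk.1 mk.2))).card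

open Finset

/-- Number of entries in row `m` of Pascal's triangle not divisible by `p`. -/
def Grow (p m : ℕ) : ℕ :=
  ((Finset.range (m + 1)).filter (fun k => ¬ p ∣ Nat.choose m k)).card

lemma Fcount_eq_sum (p n : ℕ) : Fcount p n = ∑ m ∈ Finset.range n, Grow p m := by
  unfold Fcount Grow
  rw [Finset.card_filter, Finset.sum_product]
  refine Finset.sum_congr rfl fun m hm => ?_
  rw [Finset.card_filter]
  rw [Finset.mem_range] at hm
  rw [← Finset.sum_subset (Finset.range_subset_range.2 hm)
    (f := fun k => if k ≤ m ∧ ¬ p ∣ Nat.choose m k then 1 else 0)]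
  · refine Finset.sum_congr rfl fun k hk => ?_
    rw [Finset.mem_range, Nat.lt_succ_iff] at hk
    simp [hk]
  · intro k _ hk
    rw [Finset.mem_range, Nat.lt_succ_iff] at hk
    simp [hk]

lemma not_dvd_choose_small {p r t : ℕ} (hp : p.Prime) (hr : r < p) (ht : t ≤ r) :
    ¬ p ∣ Nat.choose r t := by
  intro h
  have h2 : p ∣ r.factorial := by
    rw [← Nat.choose_mul_factorial_mul_factorial ht]
    exact Dvd.dvd.mul_right (Dvd.dvd.mul_right h _) _
  exact absurd ((Nat.Prime.dvd_factorial hp).1 h2) (Nat.not_le.2 hr)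

lemma not_dvd_choose_iff {p : ℕ} (hp : p.Prime) (m k : ℕ) :
    ¬ p ∣ Nat.choose m k ↔ k % p ≤ m % p ∧ ¬ p ∣ Nat.choose (m / p) (k / p) := by
  haveI : Fact p.Prime := ⟨hp⟩
  have H := Choose.choose_modEq_choose_mod_mul_choose_div_nat (p := p) (n := m) (k := k)
  have hdvd : p ∣ Nat.choose m k ↔
      p ∣ Nat.choose (m % p) (k % p) * Nat.choose (m / p) (k / p) := by
    constructor
    · intro h; exact (Nat.modEq_zero_iff_dvd).1 ((Nat.ModEq.symm H).trans
        ((Nat.modEq_zero_iff_dvd).2 h))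
    · intro h; exact (Nat.modEq_zero_iff_dvd).1 (H.trans ((Nat.modEq_zero_iff_dvd).2 h))
  rw [hdvd, hp.dvd_mul]
  have hmod : p ∣ Nat.choose (m % p) (k % p) ↔ ¬ (k % p ≤ m % p) := by
    constructor
    · intro h hle
      exact not_dvd_choose_small hp (Nat.mod_lt _ hp.pos) hle h
    · intro h
      rw [Nat.choose_eq_zero_of_lt (Nat.not_le.1 h)]
      exact dvd_zero p
  tauto

lemma sum_range_mul_eq {M : Type*} [AddCommMonoid M] (f : ℕ → M) (p b : ℕ) :
    ∑ k ∈ Finset.range (b * p), f k = ∑ s ∈ Finset.range b, ∑ t ∈ Finset.range p, f (s * p + t) := by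
  induction b with
  | zero => simp
  | succ b ih =>
    rw [Nat.succ_mul, Finset.sum_range_add, ih, Finset.sum_range_succ]

lemma Grow_eq {p : ℕ} (hp : p.Prime) (m : ℕ) :
    Grow p m = (m % p + 1) * Grow p (m / p) := by
  have hm : m + 1 ≤ (m / p + 1) * p := by
    have h1 := Nat.div_add_mod m p
    have h2 := Nat.mod_lt m hp.pos
    have h3 : (m / p + 1) * p = p * (m / p) + p := by ring
    omega
  unfold Grow
  rw [Finset.card_filter]
  rw [Finset.sum_subset (Finset.range_subset_range.2 hm)
    (by
      intro k hk hk2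
      rw [Finset.mem_range, Nat.lt_succ_iff, Nat.not_le] at hk2
      simp [Nat.choose_eq_zero_of_lt hk2])]
  rw [sum_range_mul_eq]
  have key : ∀ s ∈ Finset.range (m / p + 1), ∀ t ∈ Finset.range p,
      (if ¬ p ∣ Nat.choose m (s * p + t) then (1:ℕ) else 0) =
      (if t ≤ m % p ∧ ¬ p ∣ Nat.choose (m / p) s then 1 else 0) := by
    intro s _ t ht
    rw [Finset.mem_range] at ht
    have h1 : (s * p + t) % p = t := by
      rw [Nat.mul_add_mod', Nat.mod_eq_of_lt ht]
    have h2 : (s * p + t) / p = s := by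
      rw [Nat.add_comm, Nat.add_mul_div_right _ _ hp.pos, Nat.div_eq_of_lt ht, Nat.zero_add]
    refine if_congr ?_ rfl rfl
    rw [not_dvd_choose_iff hp, h1, h2]
  rw [Finset.sum_congr rfl (fun s hs => Finset.sum_congr rfl (key s hs))]
  have inner : ∀ s : ℕ, (∑ t ∈ Finset.range p,
      if t ≤ m % p ∧ ¬ p ∣ Nat.choose (m / p) s then (1:ℕ) else 0) =
      (m % p + 1) * (if ¬ p ∣ Nat.choose (m / p) s then 1 else 0) := by
    intro s
    by_cases hc : p ∣ Nat.choose (m / p) s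
    · simp [hc]
    · simp only [hc, not_false_iff, and_true, if_true, mul_one]
      rw [← Finset.card_filter]
      have : (Finset.range p).filter (fun t => t ≤ m % p) = Finset.range (m % p + 1) := by
        ext t
        simp only [Finset.mem_filter, Finset.mem_range, Nat.lt_succ_iff]
        have := Nat.mod_lt m hp.pos
        omega
      rw [this, Finset.card_range]
  rw [Finset.sum_congr rfl (fun s _ => inner s), ← Finset.mul_sum, Finset.card_filter]

lemma Fcount_succ (p n : ℕ) : Fcount p (n + 1) = Fcount p n + Grow p n := by
  rw [Fcount_eq_sum, Fcount_eq_sum, Finset.sum_range_succ]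

/-- For a prime `p`, `F_p` satisfies the recurrence
`F_p(n) = ∑_{j=0}^{p-1} (p-j) F_p(⌊(n+j)/p⌋)` for all `n ≥ 0`, with
`F_p(j) = C(j+1,2)` for `0 ≤ j ≤ p-1`. -/
theorem Fcount_recurrence (p : ℕ) (hp : p.Prime) :
    (∀ n : ℕ, Fcount p n = ∑ j ∈ Finset.range p, (p - j) * Fcount p ((n + j) / p)) ∧
    (∀ j : ℕ, j ≤ p - 1 → Fcount p j = Nat.choose (j + 1) 2) := by
  constructor
  · intro n
    induction n with
    | zero =>
      have h0 : Fcount p 0 = 0 := by simp [Fcount]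
      rw [h0]
      symm
      apply Finset.sum_eq_zero
      intro j hj
      rw [Finset.mem_range] at hj
      rw [Nat.zero_add, Nat.div_eq_of_lt hj, h0, Nat.mul_zero]
    | succ n ih =>
      rw [Fcount_succ, ih]
      set r := n % p with hr
      set q := n / p with hq
      have hrp : r < p := Nat.mod_lt _ hp.pos
      have hn : n = p * q + r := (Nat.div_add_mod n p).symm ▸ by omega
      have key : ∀ j ∈ Finset.range p,
          (p - j) * Fcount p ((n + 1 + j) / p) =
          (p - j) * Fcount p ((n + j) / p) +
            (if j = p - 1 - r then (r + 1) * Grow p q else 0) := by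
        intro j hj
        rw [Finset.mem_range] at hj
        by_cases hjr : j = p - 1 - r
        · subst hjr
          have hpq : p * (q + 1) = p * q + p := by ring
          have e1 : n + 1 + (p - 1 - r) = p * (q + 1) := by omega
          have e2 : n + (p - 1 - r) = p * q + (p - 1) := by omega
          rw [e1, e2, Nat.mul_div_cancel_left _ hp.pos,
            Nat.mul_add_div hp.pos, Nat.div_eq_of_lt (by omega : p - 1 < p)]
          rw [Fcount_succ]
          have e3 : p - (p - 1 - r) = r + 1 := by omega
          rw [e3, if_pos rfl]
          ring
        · have e1 : n + 1 + j = p * q + (r + 1 + j) := by omega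
          have e2 : n + j = p * q + (r + j) := by omega
          have same : (r + 1 + j) / p = (r + j) / p := by
            rcases Nat.lt_or_ge (r + 1 + j) p with h | h
            · rw [Nat.div_eq_of_lt h, Nat.div_eq_of_lt (by omega)]
            · have h' : r + 1 + j ≠ p := by omega
              have hlt : r + 1 + j < 2 * p := by omega
              have hge : p ≤ r + j := by omega
              have d1 : (r + 1 + j) / p = 1 := by
                rw [Nat.div_eq_sub_div hp.pos (by omega), Nat.div_eq_of_lt (by omega)]
              have d2 : (r + j) / p = 1 := by
                rw [Nat.div_eq_sub_div hp.pos hge, Nat.div_eq_of_lt (by omega)]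
              rw [d1, d2]
          rw [e1, e2, Nat.mul_add_div hp.pos, Nat.mul_add_div hp.pos, same, if_neg hjr,
            Nat.add_zero]
      rw [Finset.sum_congr rfl key, Finset.sum_add_distrib,
        Finset.sum_ite_eq' (Finset.range p) (p - 1 - r) (fun _ => (r + 1) * Grow p q),
        if_pos (Finset.mem_range.2 (by omega)), Grow_eq hp, ← hr, ← hq]
  · intro j hj
    have hjp : j < p := by have := hp.two_le; omega
    rw [Fcount_eq_sum]
    have hg : ∀ m ∈ Finset.range j, Grow p m = m + 1 := by
      intro m hm
      rw [Finset.mem_range] at hm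
      unfold Grow
      rw [Finset.filter_true_of_mem, Finset.card_range]
      intro k hk
      rw [Finset.mem_range, Nat.lt_succ_iff] at hk
      exact not_dvd_choose_small hp (by omega) hk
    rw [Finset.sum_congr rfl hg]
    have : ∑ m ∈ Finset.range j, (m + 1) = ∑ i ∈ Finset.range (j + 1), i := by
      rw [Finset.sum_range_succ']
      simp
    rw [this, Finset.sum_range_id, Nat.choose_two_right]
end

section
/- Let p be a prime. Then F_p(p·n) = C(p+1, 2) · F_p(n) for every integer n ≥ 1. -/
lemma not_dvd_choose_of_lt (p b d : ℕ) (hp : p.Prime) (hb : b < p) (hd : d ≤ b) :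
    ¬ p ∣ Nat.choose b d := by
  intro h
  have h1 : p ∣ Nat.factorial b := by
    rw [← Nat.choose_mul_factorial_mul_factorial hd]
    exact (h.mul_right _).mul_right _
  exact absurd ((Nat.Prime.dvd_factorial hp).mp h1) (not_le.mpr hb)

lemma lucas_dvd (p m k : ℕ) (hp : p.Prime) :
    p ∣ Nat.choose m k ↔ p ∣ Nat.choose (m % p) (k % p) ∨ p ∣ Nat.choose (m / p) (k / p) := by
  haveI : Fact p.Prime := ⟨hp⟩
  have := @Choose.choose_modEq_choose_mod_mul_choose_div_nat m k p _
  rw [Nat.ModEq] at this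
  rw [Nat.dvd_iff_mod_eq_zero, this, ← Nat.dvd_iff_mod_eq_zero, hp.dvd_mul]

/-- For a prime `p`, `F_p(p·n) = C(p+1,2) · F_p(n)` for every `n ≥ 1`. -/
theorem Fcount_mul_p (p : ℕ) (hp : p.Prime) (n : ℕ) (hn : 1 ≤ n) :
    Fcount p (p * n) = Nat.choose (p + 1) 2 * Fcount p n := by
  have hp0 : 0 < p := hp.pos
  classical
  set S₁ := (Finset.range n ×ˢ Finset.range n).filter
    (fun mk => mk.2 ≤ mk.1 ∧ ¬ (p ∣ Nat.choose mk.1 mk.2)) with hS₁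
  set S₂ := (Finset.range p ×ˢ Finset.range p).filter (fun bd => bd.2 ≤ bd.1) with hS₂
  have key : Fcount p (p * n) = (S₁ ×ˢ S₂).card := by
    unfold Fcount
    apply Finset.card_bij'
      (fun mk _ => ((mk.1 / p, mk.2 / p), (mk.1 % p, mk.2 % p)))
      (fun x _ => (p * x.1.1 + x.2.1, p * x.1.2 + x.2.2))
    · rintro ⟨m, k⟩ hmk
      simp only [hS₁, hS₂, Finset.mem_filter, Finset.mem_product, Finset.mem_range] at hmk ⊢
      obtain ⟨⟨hm, hk⟩, hkm, hdvd⟩ := hmk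
      rw [lucas_dvd p m k hp] at hdvd
      push_neg at hdvd
      obtain ⟨h1, h2⟩ := hdvd
      have hcm : k % p ≤ m % p := by
        by_contra h
        exact h1 (by simp [Nat.choose_eq_zero_of_lt (not_le.mp h)])
      have hca : k / p ≤ m / p := by
        by_contra h
        exact h2 (by simp [Nat.choose_eq_zero_of_lt (not_le.mp h)])
      refine ⟨⟨⟨?_, ?_⟩, hca, h2⟩, ⟨Nat.mod_lt _ hp0, Nat.mod_lt _ hp0⟩, hcm⟩
      · exact Nat.div_lt_of_lt_mul hm
      · exact Nat.div_lt_of_lt_mul hk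
    · rintro ⟨⟨a, c⟩, ⟨b, d⟩⟩ hx
      simp only [hS₁, hS₂, Finset.mem_product, Finset.mem_filter, Finset.mem_range] at hx
      obtain ⟨⟨⟨ha, hc⟩, hca, hdvd⟩, ⟨hb, hd⟩, hdb⟩ := hx
      simp only [Finset.mem_filter, Finset.mem_product, Finset.mem_range]
      have hmod1 : (p * a + b) % p = b := by simp [Nat.mul_add_mod, Nat.mod_eq_of_lt hb]
      have hmod2 : (p * c + d) % p = d := by simp [Nat.mul_add_mod, Nat.mod_eq_of_lt hd]
      have hdiv1 : (p * a + b) / p = a := by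
        rw [Nat.mul_add_div hp0, Nat.div_eq_of_lt hb]; omega
      have hdiv2 : (p * c + d) / p = c := by
        rw [Nat.mul_add_div hp0, Nat.div_eq_of_lt hd]; omega
      refine ⟨⟨?_, ?_⟩, ?_, ?_⟩
      · calc p * a + b < p * a + p := by omega
          _ = p * (a + 1) := by ring
          _ ≤ p * n := Nat.mul_le_mul_left p (by omega)
      · calc p * c + d < p * c + p := by omega
          _ = p * (c + 1) := by ring
          _ ≤ p * n := Nat.mul_le_mul_left p (by omega)
      · rcases lt_or_eq_of_le hca with h | h
        · calc p * c + d ≤ p * c + p := by omega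
            _ = p * (c + 1) := by ring
            _ ≤ p * a := Nat.mul_le_mul_left p (by omega)
            _ ≤ p * a + b := by omega
        · subst h; omega
      · rw [lucas_dvd p _ _ hp, hmod1, hmod2, hdiv1, hdiv2]
        push_neg
        exact ⟨not_dvd_choose_of_lt p b d hp hb hdb, hdvd⟩
    · rintro ⟨m, k⟩ hmk
      simp only [Prod.mk.injEq]
      exact ⟨Nat.div_add_mod m p, Nat.div_add_mod k p⟩
    · rintro ⟨⟨a, c⟩, ⟨b, d⟩⟩ hx
      simp only [hS₁, hS₂, Finset.mem_product, Finset.mem_filter, Finset.mem_range] at hx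
      obtain ⟨⟨⟨ha, hc⟩, _, _⟩, ⟨hb, hd⟩, _⟩ := hx
      simp only [Prod.mk.injEq]
      refine ⟨⟨?_, ?_⟩, ?_, ?_⟩
      · rw [Nat.mul_add_div hp0, Nat.div_eq_of_lt hb]; omega
      · rw [Nat.mul_add_div hp0, Nat.div_eq_of_lt hd]; omega
      · simp [Nat.mul_add_mod, Nat.mod_eq_of_lt hb]
      · simp [Nat.mul_add_mod, Nat.mod_eq_of_lt hd]
  rw [key, Finset.card_product]
  have hS₂card : S₂.card = Nat.choose (p + 1) 2 := by
    have h1 : S₂.card = ∑ b ∈ Finset.range p, (b + 1) := by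
      rw [hS₂, Finset.card_filter, Finset.sum_product]
      refine Finset.sum_congr rfl fun b hb => ?_
      rw [Finset.mem_range] at hb
      rw [← Finset.card_filter]
      have hset : (Finset.range p).filter (fun d => (b, d).2 ≤ (b, d).1)
          = Finset.range (b + 1) := by
        ext d; simp only [Finset.mem_filter, Finset.mem_range, Nat.lt_succ_iff]; omega
      rw [hset, Finset.card_range]
    have h2 : (∑ i ∈ Finset.range (p + 1), i) * 2 = (p + 1) * p := by
      simpa using Finset.sum_range_id_mul_two (p + 1)
    have h3 : ∑ i ∈ Finset.range (p + 1), i = ∑ b ∈ Finset.range p, (b + 1) := by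
      rw [Finset.sum_range_succ']; simp
    rw [h1, Nat.choose_two_right, ← h3]
    simp only [Nat.add_sub_cancel]
    omega
  rw [hS₂card]
  rw [mul_comm]
  rfl
end

section
/- Let p be a prime and suppose the function G_p attains its minimum on [1/p, 1] at a point ŝ. Define n_k := ⌊p^k ŝ⌋ for integers k ≥ 1. Then lim_{k→∞} F_p(n_k)/n_k^{ρ_p} = G_p(ŝ) = β_p. -/
open Finset

/-- `A_p = C(p+1,2) = p(p+1)/2`. -/
noncomputable def Ap (p : ℕ) : ℝ := p * (p + 1) / 2

/-- `ρ_p = log_p A_p`. -/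
noncomputable def rhoP (p : ℕ) : ℝ := Real.log (Ap p) / Real.log p

/-- `bdig p x j` is the `j`-th base-`p` digit (`j ≥ 1`) of `x ∈ [0,1)`:
`⌊p^j x⌋ − p ⌊p^{j-1} x⌋`. -/
noncomputable def bdig (p : ℕ) (x : ℝ) (j : ℕ) : ℤ :=
  ⌊(p : ℝ) ^ j * x⌋ - p * ⌊(p : ℝ) ^ (j - 1) * x⌋

/-- `φ_p(x) = (1/2) ∑_{j≥1} A_p^{-j} b_j(x) ∏_{i=1}^{j} (b_i(x)+1)` for `x ∈ [0,1)`,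
with `φ_p(1) = 1`. -/
noncomputable def phiP (p : ℕ) (x : ℝ) : ℝ :=
  if x = 1 then 1 else
    (1 / 2) * ∑' j : ℕ,
      ((bdig p x (j + 1) : ℝ) * ∏ i ∈ Finset.range (j + 1), ((bdig p x (i + 1) : ℝ) + 1))
        / (Ap p) ^ (j + 1)

/-- `G_p(s) = s^{-ρ_p} φ_p(s)`. -/
noncomputable def Gp (p : ℕ) (s : ℝ) : ℝ := s ^ (-(rhoP p)) * phiP p s

/-- `β_p = liminf_{n→∞} F_p(n) / n^{ρ_p}`. -/
noncomputable def betaP (p : ℕ) : ℝ :=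
  Filter.atTop.liminf (fun n : ℕ => (Fcount p n : ℝ) / (n : ℝ) ^ (rhoP p))


def cnt (p m : ℕ) : ℕ := ((Finset.range (m+1)).filter (fun k => ¬ p ∣ m.choose k)).card
def Tn (r : ℕ) : ℕ := ∑ i ∈ Finset.range r, (i+1)

lemma Tn_succ (r : ℕ) : Tn (r+1) = Tn r + (r+1) := Finset.sum_range_succ _ _

lemma cnt_zero {p : ℕ} (hp : p.Prime) : cnt p 0 = 1 := by
  simp [cnt, Finset.filter_singleton, hp.one_lt.ne']

lemma not_dvd_choose_of_lt_s6 {p r r' : ℕ} (hp : p.Prime) (hr : r < p) (h : r' ≤ r) :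
    ¬ p ∣ r.choose r' := by
  intro hdvd
  have h1 : r.choose r' * r'.factorial * (r - r').factorial = r.factorial :=
    Nat.choose_mul_factorial_mul_factorial h
  have : p ∣ r.factorial := by
    rw [← h1]; exact (hdvd.mul_right _).mul_right _
  exact absurd ((Nat.Prime.dvd_factorial hp).mp this) (not_le.mpr hr)

lemma dvd_choose_iff {p : ℕ} (hp : p.Prime) (n k : ℕ) :
    p ∣ n.choose k ↔ (p ∣ (n % p).choose (k % p) ∨ p ∣ (n / p).choose (k / p)) := by
  haveI : Fact p.Prime := ⟨hp⟩
  have h := Choose.choose_modEq_choose_mod_mul_choose_div_nat (n := n) (k := k) (p := p)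
  rw [Nat.ModEq] at h
  constructor
  · intro hd
    have : p ∣ (n % p).choose (k % p) * ((n / p).choose (k / p)) := by
      have := (Nat.modEq_zero_iff_dvd).mpr hd
      exact (Nat.modEq_zero_iff_dvd).mp (h.symm.trans this)
    exact (Nat.Prime.dvd_mul hp).mp this
  · intro hd
    have : p ∣ (n % p).choose (k % p) * ((n / p).choose (k / p)) := by
      rcases hd with h1 | h1
      · exact h1.mul_right _
      · exact h1.mul_left _
    exact (Nat.modEq_zero_iff_dvd).mp (h.trans ((Nat.modEq_zero_iff_dvd).mpr this))

lemma cnt_rec {p : ℕ} (hp : p.Prime) (q r : ℕ) (hr : r < p) :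
    cnt p (p * q + r) = (r + 1) * cnt p q := by
  classical
  have hchar : ∀ k, (¬ p ∣ (p*q+r).choose k) ↔ ((¬ p ∣ q.choose (k / p)) ∧ k % p ≤ r) := by
    intro k
    have h1 : (p*q+r) % p = r := by simp [Nat.mul_add_mod, Nat.mod_eq_of_lt hr]
    have h2 : (p*q+r) / p = q := by
      rw [Nat.mul_add_div hp.pos, Nat.div_eq_of_lt hr, add_zero]
    rw [dvd_choose_iff hp, h1, h2]
    constructor
    · intro h; push_neg at h
      refine ⟨h.2, ?_⟩
      by_contra hb
      exact h.1 (by rw [Nat.choose_eq_zero_of_lt (by omega)]; exact dvd_zero p)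
    · rintro ⟨ha, hb⟩ (hc | hc)
      · exact not_dvd_choose_of_lt_s6 hp hr hb hc
      · exact ha hc
  have hcard : ((Finset.range (q+1)).filter (fun a => ¬ p ∣ q.choose a) ×ˢ Finset.range (r+1)).card
      = ((Finset.range (p*q+r+1)).filter (fun k => ¬ p ∣ (p*q+r).choose k)).card := by
    apply Finset.card_bij' (fun ab _ => p * ab.1 + ab.2) (fun k _ => (k / p, k % p))
    · rintro ⟨a, b⟩ hab
      simp only [Finset.mem_product, Finset.mem_filter, Finset.mem_range] at hab ⊢
      obtain ⟨⟨ha1, ha2⟩, hb1⟩ := hab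
      have ha : a ≤ q := by omega
      have hb : b ≤ r := by omega
      have hd1 : (p*a+b)/p = a := by
        rw [Nat.mul_add_div hp.pos, Nat.div_eq_of_lt (by omega), add_zero]
      have hd2 : (p*a+b)%p = b := by
        simp [Nat.mul_add_mod, Nat.mod_eq_of_lt (show b < p by omega)]
      have hmul := Nat.mul_le_mul_left p ha
      exact ⟨by omega, (hchar _).mpr ⟨by rwa [hd1], by rw [hd2]; exact hb⟩⟩
    · intro k hk
      simp only [Finset.mem_filter, Finset.mem_range] at hk
      simp only [Finset.mem_product, Finset.mem_filter, Finset.mem_range]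
      obtain ⟨hk1, hk2⟩ := hk
      obtain ⟨hc1, hc2⟩ := (hchar k).mp hk2
      refine ⟨⟨?_, hc1⟩, by omega⟩
      by_contra hgt
      exact hc1 (by rw [Nat.choose_eq_zero_of_lt (by omega)]; exact dvd_zero p)
    · rintro ⟨a, b⟩ hab
      simp only [Finset.mem_product, Finset.mem_filter, Finset.mem_range] at hab
      have hd1 : (p*a+b)/p = a := by
        rw [Nat.mul_add_div hp.pos, Nat.div_eq_of_lt (by omega), add_zero]
      have hd2 : (p*a+b)%p = b := by
        simp [Nat.mul_add_mod, Nat.mod_eq_of_lt (show b < p by omega)]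
      simp [hd1, hd2]
    · intro k hk
      exact Nat.div_add_mod k p
  rw [cnt, cnt, ← hcard, Finset.card_product, Finset.card_range, mul_comm]

def Ssum (p n : ℕ) : ℕ := ∑ m ∈ Finset.range n, cnt p m

lemma Ssum_succ (p n : ℕ) : Ssum p (n+1) = Ssum p n + cnt p n := Finset.sum_range_succ _ _

lemma Fcount_eq (p n : ℕ) : Fcount p n = Ssum p n := by
  classical
  rw [Fcount, Ssum]
  rw [Finset.card_eq_sum_card_fiberwise
    (f := Prod.fst) (t := Finset.range n)
    (by rintro ⟨m, k⟩ hmk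
        simp only [Finset.mem_coe, Finset.mem_filter, Finset.mem_product, Finset.mem_range] at hmk
        exact Finset.mem_range.mpr hmk.1.1)]
  apply Finset.sum_congr rfl
  intro m hm
  rw [Finset.mem_range] at hm
  rw [cnt]
  refine Finset.card_bij' (fun x _ => x.2) (fun k _ => (m, k)) ?_ ?_ ?_ ?_
  · rintro ⟨a, b⟩ hab
    simp only [Finset.mem_filter, Finset.mem_product, Finset.mem_range] at hab ⊢
    obtain ⟨⟨⟨_, _⟩, hle, hnd⟩, hfst⟩ := hab
    subst hfst
    exact ⟨by omega, hnd⟩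
  · intro k hk
    simp only [Finset.mem_filter, Finset.mem_range] at hk
    simp only [Finset.mem_filter, Finset.mem_product, Finset.mem_range]
    exact ⟨⟨⟨hm, by omega⟩, ⟨by omega, hk.2⟩⟩, trivial⟩
  · rintro ⟨a, b⟩ hab
    simp only [Finset.mem_filter, Finset.mem_product, Finset.mem_range] at hab
    obtain ⟨_, hfst⟩ := hab
    simp [hfst]
  · intro k hk
    rfl

lemma Ssum_rec {p : ℕ} (hp : p.Prime) :
    ∀ q r, r ≤ p → Ssum p (p*q+r) = Tn p * Ssum p q + Tn r * cnt p q := by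
  intro q
  induction q using Nat.strong_induction_on with
  | _ q ih =>
    have h0 : Ssum p (p*q) = Tn p * Ssum p q := by
      cases q with
      | zero => simp [Ssum]
      | succ q' =>
        have hih := ih q' (Nat.lt_succ_self q') p le_rfl
        have h1 : p*(q'+1) = p*q'+p := by ring
        rw [h1, hih, Ssum_succ]
        ring
    intro r
    induction r with
    | zero => intro _; simpa [Tn] using h0
    | succ r' ihr =>
      intro hr
      have hr' : r' ≤ p := by omega
      have hstep : Ssum p (p*q + (r'+1)) = Ssum p (p*q+r') + cnt p (p*q + r') := by
        rw [show p*q + (r'+1) = (p*q+r') + 1 by ring]; exact Ssum_succ _ _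
      rw [hstep, ihr hr', cnt_rec hp q r' (by omega), Tn_succ]
      ring



noncomputable def mfl (p : ℕ) (x : ℝ) (k : ℕ) : ℕ := ⌊(p:ℝ)^k * x⌋₊

noncomputable def Dd (p : ℕ) (x : ℝ) (j : ℕ) : ℕ := mfl p x (j+1) - p * mfl p x j

noncomputable def gg (p : ℕ) (x : ℝ) (j : ℕ) : ℝ :=
  ((Tn (Dd p x j) * ∏ i ∈ Finset.range j, (Dd p x i + 1) : ℕ) : ℝ) / Ap p ^ (j+1)

lemma Tn_two (r : ℕ) : 2 * Tn r = r * (r+1) := by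
  induction r with
  | zero => simp [Tn]
  | succ n ih => rw [Tn_succ, Nat.mul_add, ih]; ring

lemma Tn_cast (r : ℕ) : (Tn r : ℝ) = r * (r+1) / 2 := by
  have := Tn_two r
  have h2 : (2 : ℝ) * (Tn r : ℝ) = (r : ℝ) * ((r : ℝ) + 1) := by
    exact_mod_cast congrArg (Nat.cast : ℕ → ℝ) this
  linarith

lemma Tn_p_cast (p : ℕ) : (Tn p : ℝ) = Ap p := by rw [Tn_cast, Ap]

lemma Tn_mono {a b : ℕ} (h : a ≤ b) : Tn a ≤ Tn b := by
  apply Finset.sum_le_sum_of_subset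
  exact Finset.range_subset_range.mpr h

lemma Ap_pos {p : ℕ} (hp : p.Prime) : 0 < Ap p := by
  have : (2:ℝ) ≤ (p:ℝ) := by exact_mod_cast hp.two_le
  rw [Ap]; nlinarith

lemma p_lt_Ap {p : ℕ} (hp : p.Prime) : (p : ℝ) < Ap p := by
  have : (2:ℝ) ≤ (p:ℝ) := by exact_mod_cast hp.two_le
  rw [Ap]; nlinarith

lemma mfl_succ_bounds {p : ℕ} (hp : 0 < p) {x : ℝ} (hx : 0 ≤ x) (k : ℕ) :
    p * mfl p x k ≤ mfl p x (k+1) ∧ mfl p x (k+1) < p * mfl p x k + p := by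
  have hppos : (0:ℝ) < (p:ℝ) := by exact_mod_cast hp
  set y : ℝ := (p:ℝ)^k * x with hy
  have hy0 : 0 ≤ y := by positivity
  have hstep : (p:ℝ)^(k+1) * x = (p:ℝ) * y := by rw [hy]; ring
  constructor
  · rw [mfl, mfl, hstep]
    rw [Nat.le_floor_iff (by positivity)]
    push_cast
    have := Nat.floor_le hy0
    nlinarith
  · rw [mfl, mfl, hstep]
    rw [Nat.floor_lt (by positivity)]
    push_cast
    have := Nat.lt_floor_add_one y
    nlinarith

lemma Dd_lt {p : ℕ} (hp : 0 < p) {x : ℝ} (hx : 0 ≤ x) (j : ℕ) : Dd p x j < p := by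
  have h := mfl_succ_bounds hp hx j
  rw [Dd]; omega

lemma mfl_succ_eq {p : ℕ} (hp : 0 < p) {x : ℝ} (hx : 0 ≤ x) (k : ℕ) :
    mfl p x (k+1) = p * mfl p x k + Dd p x k := by
  have h := mfl_succ_bounds hp hx k
  rw [Dd]; omega

lemma mfl_zero {x : ℝ} (p : ℕ) (hx : 0 ≤ x) (hx1 : x < 1) : mfl p x 0 = 0 := by
  rw [mfl, pow_zero, one_mul, Nat.floor_eq_zero]
  exact hx1

lemma bdig_eq_Dd {p : ℕ} (hp : 0 < p) {x : ℝ} (hx : 0 ≤ x) (j : ℕ) :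
    bdig p x (j+1) = (Dd p x j : ℤ) := by
  have h := mfl_succ_bounds hp hx j
  have e1 : ((mfl p x (j+1) : ℕ) : ℤ) = ⌊(p:ℝ)^(j+1) * x⌋ := by
    rw [mfl]; exact Int.natCast_floor_eq_floor (by positivity)
  have e2 : ((mfl p x j : ℕ) : ℤ) = ⌊(p:ℝ)^j * x⌋ := by
    rw [mfl]; exact Int.natCast_floor_eq_floor (by positivity)
  rw [bdig]
  simp only [Nat.add_sub_cancel]
  rw [← e1, ← e2, Dd]
  have := h.1
  push_cast
  omega

lemma cnt_mfl {p : ℕ} (hp : p.Prime) {x : ℝ} (hx : 0 ≤ x) (hx1 : x < 1) (k : ℕ) :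
    cnt p (mfl p x k) = ∏ i ∈ Finset.range k, (Dd p x i + 1) := by
  induction k with
  | zero => rw [mfl_zero p hx hx1, cnt_zero hp]; simp
  | succ k ih =>
    rw [mfl_succ_eq hp.pos hx k, cnt_rec hp _ _ (Dd_lt hp.pos hx k),
      Finset.prod_range_succ, ih]
    ring

lemma Ssum_mfl {p : ℕ} (hp : p.Prime) {x : ℝ} (hx : 0 ≤ x) (hx1 : x < 1) (k : ℕ) :
    (Ssum p (mfl p x k) : ℝ) = Ap p ^ k * ∑ j ∈ Finset.range k, gg p x j := by
  induction k with
  | zero => rw [mfl_zero p hx hx1]; simp [Ssum]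
  | succ k ih =>
    have hA : Ap p ≠ 0 := (Ap_pos hp).ne'
    rw [mfl_succ_eq hp.pos hx k,
      Ssum_rec hp _ _ (Dd_lt hp.pos hx k).le]
    push_cast
    rw [ih, Tn_p_cast, cnt_mfl hp hx hx1 k, Finset.sum_range_succ, gg]
    push_cast
    field_simp
    ring


lemma gg_nonneg (p : ℕ) (x : ℝ) (j : ℕ) (hA : 0 < Ap p) : 0 ≤ gg p x j := by
  rw [gg]; positivity

lemma gg_le {p : ℕ} (hp : p.Prime) {x : ℝ} (hx : 0 ≤ x) (j : ℕ) :
    gg p x j ≤ ((p : ℝ) / Ap p) ^ j := by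
  have hA := Ap_pos hp
  have hppos : (0:ℝ) < (p:ℝ) := by exact_mod_cast hp.pos
  have h1 : (Tn (Dd p x j) : ℝ) ≤ Ap p := by
    rw [← Tn_p_cast]
    exact_mod_cast Tn_mono (Dd_lt hp.pos hx j).le
  have h2 : ∏ i ∈ Finset.range j, ((Dd p x i : ℝ) + 1) ≤ (p:ℝ)^j := by
    calc ∏ i ∈ Finset.range j, ((Dd p x i : ℝ) + 1)
        ≤ ∏ _i ∈ Finset.range j, (p:ℝ) := by
          apply Finset.prod_le_prod
          · intro i _; positivity
          · intro i _
            have := Dd_lt hp.pos hx i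
            exact_mod_cast (by omega : Dd p x i + 1 ≤ p)
      _ = (p:ℝ)^j := by rw [Finset.prod_const, Finset.card_range]
  have hN : ((Tn (Dd p x j) * ∏ i ∈ Finset.range j, (Dd p x i + 1) : ℕ) : ℝ)
      ≤ Ap p * (p:ℝ)^j := by
    push_cast
    have hprodnn : (0:ℝ) ≤ ∏ i ∈ Finset.range j, ((Dd p x i : ℝ) + 1) :=
      Finset.prod_nonneg (fun i _ => by positivity)
    exact mul_le_mul h1 h2 hprodnn hA.le
  rw [gg, div_pow, div_le_div_iff₀ (by positivity) (by positivity)]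
  have hmul := mul_le_mul_of_nonneg_right hN (pow_nonneg hA.le j)
  calc ((Tn (Dd p x j) * ∏ i ∈ Finset.range j, (Dd p x i + 1) : ℕ) : ℝ) * Ap p ^ j
      ≤ Ap p * (p:ℝ)^j * Ap p ^ j := hmul
    _ = (p:ℝ)^j * Ap p ^ (j+1) := by ring

lemma summable_gg {p : ℕ} (hp : p.Prime) {x : ℝ} (hx : 0 ≤ x) :
    Summable (gg p x) := by
  have hA := Ap_pos hp
  apply Summable.of_nonneg_of_le (fun j => gg_nonneg p x j hA) (fun j => gg_le hp hx j)
  apply summable_geometric_of_lt_one (by positivity)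
  rw [div_lt_one hA]
  exact p_lt_Ap hp

lemma phi_eq {p : ℕ} (hp : p.Prime) {x : ℝ} (hx : 0 ≤ x) (hx1 : x < 1) :
    phiP p x = ∑' j, gg p x j := by
  rw [phiP, if_neg (by linarith)]
  have hterm : ∀ j : ℕ,
      ((bdig p x (j + 1) : ℝ) * ∏ i ∈ Finset.range (j + 1), ((bdig p x (i + 1) : ℝ) + 1))
        / (Ap p) ^ (j + 1) = 2 * gg p x j := by
    intro j
    have hb : ∀ i : ℕ, (bdig p x (i+1) : ℝ) = (Dd p x i : ℝ) := by
      intro i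
      rw [bdig_eq_Dd hp.pos hx i]
      push_cast
      ring
    rw [gg]
    push_cast
    rw [hb, Finset.prod_congr rfl (fun i _ => by rw [hb i]), Finset.prod_range_succ]
    have h2T : (2 : ℝ) * (Tn (Dd p x j) : ℝ) = (Dd p x j : ℝ) * ((Dd p x j : ℝ) + 1) := by
      rw [Tn_cast]; ring
    have hA : Ap p ≠ 0 := (Ap_pos hp).ne'
    field_simp
    linear_combination (-1 : ℝ) * h2T
  rw [tsum_congr hterm, tsum_mul_left]
  ring

lemma rpow_rho {p : ℕ} (hp : p.Prime) : (p : ℝ) ^ (rhoP p) = Ap p := by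
  have h1 : (1:ℝ) < (p:ℝ) := by exact_mod_cast hp.one_lt
  have hlog : Real.log (p:ℝ) ≠ 0 :=
    Real.log_ne_zero_of_pos_of_ne_one (by linarith) (by linarith)
  rw [rhoP, Real.rpow_def_of_pos (by linarith), mul_comm, div_mul_cancel₀ _ hlog,
    Real.exp_log (Ap_pos hp)]


lemma pow_rho {p : ℕ} (hp : p.Prime) (k : ℕ) : ((p:ℝ)^k) ^ (rhoP p) = Ap p ^ k := by
  have hp0 : (0:ℝ) ≤ (p:ℝ) := by positivity
  rw [← Real.rpow_natCast (p:ℝ) k, ← Real.rpow_mul hp0, mul_comm,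
    Real.rpow_mul hp0, rpow_rho hp, Real.rpow_natCast]

lemma ratio_eq {p : ℕ} (hp : p.Prime) {x : ℝ} (hx : 0 ≤ x) (hx1 : x < 1) (k : ℕ) :
    (Ssum p (mfl p x k) : ℝ) / ((mfl p x k : ℝ)) ^ (rhoP p)
      = (∑ j ∈ Finset.range k, gg p x j)
          / ((mfl p x k : ℝ) / (p:ℝ)^k) ^ (rhoP p) := by
  have hp0 : (0:ℝ) < (p:ℝ) := by exact_mod_cast hp.pos
  have hmfl : (mfl p x k : ℝ) = (p:ℝ)^k * ((mfl p x k : ℝ)/(p:ℝ)^k) := by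
    field_simp
  rw [Ssum_mfl hp hx hx1 k]
  conv_lhs => rw [hmfl]
  rw [Real.mul_rpow (by positivity) (by positivity), pow_rho hp,
    mul_div_mul_left _ _ (pow_ne_zero k (Ap_pos hp).ne')]

lemma Gp_eq_div {p : ℕ} {s : ℝ} (hs : 0 < s) :
    Gp p s = phiP p s / s ^ (rhoP p) := by
  rw [Gp, Real.rpow_neg hs.le, inv_mul_eq_div]

lemma tendsto_main {p : ℕ} (hp : p.Prime) {s : ℝ} (hs1 : (p:ℝ)⁻¹ ≤ s) (hs2 : s < 1) :
    Filter.Tendsto (fun k : ℕ => (Ssum p (mfl p s k) : ℝ) / (mfl p s k : ℝ) ^ (rhoP p))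
      Filter.atTop (nhds (Gp p s)) := by
  have hp0 : (0:ℝ) < (p:ℝ) := by exact_mod_cast hp.pos
  have hs0 : 0 < s := lt_of_lt_of_le (by positivity) hs1
  have hsum := summable_gg hp (x := s) hs0.le
  have h1 : Filter.Tendsto (fun k : ℕ => ∑ j ∈ Finset.range k, gg p s j)
      Filter.atTop (nhds (phiP p s)) := by
    rw [phi_eq hp hs0.le hs2]
    exact hsum.hasSum.tendsto_sum_nat
  set t : ℕ → ℝ := fun k => (mfl p s k : ℝ) / (p:ℝ)^k with ht
  have h2 : Filter.Tendsto t Filter.atTop (nhds s) := by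
    have hlow : ∀ k, s - ((p:ℝ)⁻¹)^k ≤ t k := by
      intro k
      have h := Nat.sub_one_lt_floor ((p:ℝ)^k * s)
      rw [ht]
      simp only [mfl]
      rw [le_div_iff₀ (by positivity)]
      have : ((p:ℝ)⁻¹)^k * (p:ℝ)^k = 1 := by
        rw [← mul_pow, inv_mul_cancel₀ hp0.ne', one_pow]
      nlinarith [h]
    have hupp : ∀ k, t k ≤ s := by
      intro k
      rw [ht]
      simp only [mfl]
      rw [div_le_iff₀ (by positivity)]
      have := Nat.floor_le (show (0:ℝ) ≤ (p:ℝ)^k * s by positivity)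
      linarith
    have hgeo : Filter.Tendsto (fun k : ℕ => s - ((p:ℝ)⁻¹)^k) Filter.atTop (nhds (s - 0)) := by
      apply Filter.Tendsto.sub tendsto_const_nhds
      apply tendsto_pow_atTop_nhds_zero_of_lt_one (by positivity)
      rw [inv_lt_one_iff₀]
      right
      exact_mod_cast hp.one_lt
    rw [sub_zero] at hgeo
    exact tendsto_of_tendsto_of_tendsto_of_le_of_le hgeo tendsto_const_nhds hlow hupp
  have h3 : Filter.Tendsto (fun k => (t k) ^ (rhoP p)) Filter.atTop (nhds (s ^ (rhoP p))) :=
    ((Real.continuousAt_rpow_const s (rhoP p) (Or.inl hs0.ne')).tendsto).comp h2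
  have h4 := h1.div h3 (ne_of_gt (Real.rpow_pos_of_pos hs0 _))
  rw [← Gp_eq_div hs0] at h4
  exact h4.congr (fun k => (ratio_eq hp hs0.le hs2 k).symm)

lemma Ssum_pow {p : ℕ} (hp : p.Prime) (k : ℕ) : Ssum p (p^k) = Tn p ^ k := by
  induction k with
  | zero =>
    simp [Ssum, Finset.sum_range_one, cnt_zero hp]
  | succ k ih =>
    have h := Ssum_rec hp (p^k) 0 (Nat.zero_le p)
    simp only [Nat.add_zero] at h
    rw [pow_succ, mul_comm (p^k) p, h, ih, pow_succ]
    simp [Tn]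
    ring

lemma mfl_one (p : ℕ) (k : ℕ) : mfl p 1 k = p^k := by
  rw [mfl, mul_one]
  rw [show ((p:ℝ)^k) = ((p^k : ℕ) : ℝ) by push_cast; ring]
  exact Nat.floor_natCast _

lemma Gp_one (p : ℕ) : Gp p 1 = 1 := by
  rw [Gp, Real.one_rpow, one_mul, phiP, if_pos rfl]

lemma tendsto_main_one {p : ℕ} (hp : p.Prime) :
    Filter.Tendsto (fun k : ℕ => (Ssum p (mfl p 1 k) : ℝ) / (mfl p 1 k : ℝ) ^ (rhoP p))
      Filter.atTop (nhds (Gp p 1)) := by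
  have heq : ∀ k : ℕ, (Ssum p (mfl p 1 k) : ℝ) / (mfl p 1 k : ℝ) ^ (rhoP p) = 1 := by
    intro k
    rw [mfl_one, Ssum_pow hp]
    rw [show ((p^k : ℕ) : ℝ) = (p:ℝ)^k by push_cast; ring, pow_rho hp]
    rw [show ((Tn p ^ k : ℕ) : ℝ) = (Tn p : ℝ)^k by push_cast; ring, Tn_p_cast]
    exact div_self (pow_ne_zero k (Ap_pos hp).ne')
  rw [Gp_one]
  exact Filter.Tendsto.congr (fun k => (heq k).symm) tendsto_const_nhds


lemma ratio_n {p : ℕ} (hp : p.Prime) {n : ℕ} (hn : 1 ≤ n) :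
    ∃ x : ℝ, x ∈ Set.Icc ((p:ℝ)⁻¹) 1 ∧
      (Ssum p n : ℝ) / (n:ℝ) ^ (rhoP p) = Gp p x := by
  have hp0 : (0:ℝ) < (p:ℝ) := by exact_mod_cast hp.pos
  set k : ℕ := Nat.log p n + 1 with hk
  set x : ℝ := (n:ℝ) / (p:ℝ)^k with hxdef
  have hupp : n < p^k := Nat.lt_pow_succ_log_self hp.one_lt n
  have hlow : p ^ Nat.log p n ≤ n := Nat.pow_log_le_self p (by omega)
  have hx1 : x < 1 := by
    rw [hxdef, div_lt_one (by positivity)]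
    exact_mod_cast hupp
  have hxlow : (p:ℝ)⁻¹ ≤ x := by
    rw [hxdef, le_div_iff₀ (by positivity)]
    have h1 : (p:ℝ)⁻¹ * (p:ℝ)^k = (p:ℝ)^(Nat.log p n) := by
      rw [hk, pow_succ]
      field_simp
    rw [h1]
    exact_mod_cast hlow
  have hx0 : 0 < x := lt_of_lt_of_le (by positivity) hxlow
  have hmflk : mfl p x k = n := by
    rw [mfl]
    have h2 : (p:ℝ)^k * x = (n:ℝ) := by rw [hxdef]; field_simp
    rw [h2, Nat.floor_natCast]
  have hmflm : ∀ m : ℕ, mfl p x (k+m) = n * p^m := by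
    intro m
    rw [mfl]
    have h2 : (p:ℝ)^(k+m) * x = ((n * p^m : ℕ):ℝ) := by
      rw [hxdef, pow_add]
      push_cast
      field_simp
    rw [h2, Nat.floor_natCast]
  have hgg0 : ∀ j, k ≤ j → gg p x j = 0 := by
    intro j hj
    obtain ⟨m, rfl⟩ : ∃ m, j = k + m := ⟨j - k, by omega⟩
    have hD : Dd p x (k+m) = 0 := by
      rw [Dd, show k+m+1 = k+(m+1) by ring, hmflm, hmflm]
      have h3 : n * p ^ (m+1) = p * (n * p^m) := by rw [pow_succ]; ring
      rw [h3, Nat.sub_self]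
    rw [gg, hD]
    simp [Tn]
  have htsum : ∑' j, gg p x j = ∑ j ∈ Finset.range k, gg p x j :=
    tsum_eq_sum (fun j hj => hgg0 j (by simpa using Finset.mem_range.not.mp hj))
  have hre := ratio_eq hp hx0.le hx1 k
  rw [hmflk] at hre
  refine ⟨x, ⟨hxlow, hx1.le⟩, ?_⟩
  rw [hre, show (n:ℝ)/(p:ℝ)^k = x from rfl, ← htsum,
    ← phi_eq hp hx0.le hx1, ← Gp_eq_div hx0]

/-- If `G_p` attains its minimum on `[1/p,1]` at `ŝ`, then with `n_k = ⌊p^k ŝ⌋`,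
`F_p(n_k)/n_k^{ρ_p} → G_p(ŝ) = β_p`. -/
theorem tendsto_Fcount_of_min (p : ℕ) (hp : p.Prime) (shat : ℝ)
    (hs : shat ∈ Set.Icc ((p : ℝ)⁻¹) 1)
    (hmin : ∀ t ∈ Set.Icc ((p : ℝ)⁻¹) 1, Gp p shat ≤ Gp p t) :
    Filter.Tendsto
      (fun k : ℕ => (Fcount p ⌊(p : ℝ) ^ k * shat⌋₊ : ℝ) / (⌊(p : ℝ) ^ k * shat⌋₊ : ℝ) ^ rhoP p)
      Filter.atTop (nhds (Gp p shat)) ∧ Gp p shat = betaP p := by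
  obtain ⟨hs1, hs2⟩ := hs
  have hten : Filter.Tendsto
      (fun k : ℕ => (Ssum p (mfl p shat k) : ℝ) / (mfl p shat k : ℝ) ^ (rhoP p))
      Filter.atTop (nhds (Gp p shat)) := by
    rcases eq_or_lt_of_le hs2 with h1 | h1
    · rw [h1]; exact tendsto_main_one hp
    · exact tendsto_main hp hs1 h1
  have htenF : Filter.Tendsto
      (fun k : ℕ => (Fcount p ⌊(p : ℝ) ^ k * shat⌋₊ : ℝ) / (⌊(p : ℝ) ^ k * shat⌋₊ : ℝ) ^ rhoP p)
      Filter.atTop (nhds (Gp p shat)) :=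
    hten.congr (fun k => by rw [Fcount_eq]; rfl)
  refine ⟨htenF, ?_⟩
  have ha_nonneg : ∀ n : ℕ, 0 ≤ (Fcount p n : ℝ) / (n : ℝ) ^ (rhoP p) := fun n =>
    div_nonneg (Nat.cast_nonneg _) (Real.rpow_nonneg (Nat.cast_nonneg _) _)
  have haG : ∀ n : ℕ, 1 ≤ n → Gp p shat ≤ (Fcount p n : ℝ) / (n : ℝ) ^ (rhoP p) := by
    intro n hn
    obtain ⟨x, hxmem, hx⟩ := ratio_n hp hn
    rw [Fcount_eq, hx]
    exact hmin x hxmem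
  have hnk : Filter.Tendsto (fun k : ℕ => mfl p shat k) Filter.atTop Filter.atTop := by
    have hp0 : (0:ℝ) < (p:ℝ) := by exact_mod_cast hp.pos
    have hs0 : (0:ℝ) < shat := lt_of_lt_of_le (by positivity) hs1
    apply Filter.tendsto_atTop_mono' Filter.atTop
      (f₁ := fun k : ℕ => p ^ (k - 1))
    · filter_upwards [Filter.eventually_ge_atTop 1] with k hk
      rw [mfl, Nat.le_floor_iff (by positivity)]
      have hppos : (0:ℝ) < (p:ℝ) := by exact_mod_cast hp.pos
      have hpow : (p:ℝ)^k = (p:ℝ) * (p:ℝ)^(k-1) := by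
        rw [← pow_succ']
        congr 1
        omega
      have hmul : (p:ℝ)^k * shat ≥ (p:ℝ)^k * (p:ℝ)⁻¹ := by
        apply mul_le_mul_of_nonneg_left hs1 (by positivity)
      have heq : (p:ℝ)^k * (p:ℝ)⁻¹ = (p:ℝ)^(k-1) := by
        rw [hpow]
        field_simp
      push_cast
      rw [heq] at hmul
      linarith
    · exact (tendsto_pow_atTop_atTop_of_one_lt hp.one_lt).comp
        (Filter.tendsto_sub_atTop_nat 1)
  have hcomp : Filter.Tendsto
      (fun k : ℕ => (Fcount p (mfl p shat k) : ℝ) / (mfl p shat k : ℝ) ^ (rhoP p))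
      Filter.atTop (nhds (Gp p shat)) := htenF
  have hcob : Filter.IsCoboundedUnder (· ≥ ·) Filter.atTop
      (fun n : ℕ => (Fcount p n : ℝ) / (n : ℝ) ^ (rhoP p)) := by
    apply Filter.IsCoboundedUnder.of_frequently_le (a := Gp p shat + 1)
    have hev : ∀ᶠ k in Filter.atTop,
        (Fcount p (mfl p shat k) : ℝ) / (mfl p shat k : ℝ) ^ (rhoP p) ≤ Gp p shat + 1 :=
      hcomp.eventually (eventually_le_nhds (lt_add_one _))
    exact hnk.frequently hev.frequently
  have h1 : Gp p shat ≤ betaP p := by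
    apply Filter.le_liminf_of_le hcob
    exact Filter.eventually_atTop.mpr ⟨1, haG⟩
  have h2 : betaP p ≤ Gp p shat := by
    apply _root_.le_of_forall_pos_le_add
    intro ε hε
    have hev : ∀ᶠ k in Filter.atTop,
        (Fcount p (mfl p shat k) : ℝ) / (mfl p shat k : ℝ) ^ (rhoP p) ≤ Gp p shat + ε :=
      hcomp.eventually (eventually_le_nhds (by linarith))
    have hfreq : ∃ᶠ n in Filter.atTop,
        (Fcount p n : ℝ) / (n : ℝ) ^ (rhoP p) ≤ Gp p shat + ε :=
      hnk.frequently hev.frequently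
    exact Filter.liminf_le_of_frequently_le hfreq
      ⟨0, Filter.eventually_map.mpr (Filter.Eventually.of_forall ha_nonneg)⟩
  exact le_antisymm h1 h2
end

section
/- Let p be an odd prime and let ξ, η be integers with 1 ≤ ξ < p and 0 ≤ η ≤ (p−1)/2. Then φ_p(ŝ_p(ξ,η)) = ((ξ+1)/(2A_p)) · (ξ + (p−2η)(p−2η+1)/(2p(p+1))). -/
open Finset

/-- `ŝ_p(ξ,η) = (2ξ+1)/(2p) − η/p²`. -/
noncomputable def shatP (p ξ η : ℕ) : ℝ := (2 * ξ + 1) / (2 * p) - η / (p : ℝ) ^ 2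

set_option maxHeartbeats 1000000 in
/-- For an odd prime `p` and `1 ≤ ξ < p`, `0 ≤ η ≤ (p−1)/2`:
`φ_p(ŝ_p(ξ,η)) = ((ξ+1)/(2A_p)) (ξ + (p−2η)(p−2η+1)/(2p(p+1)))`. -/
theorem phiP_shat (p : ℕ) (hp : p.Prime) (hodd : Odd p) (ξ η : ℕ)
    (hξ1 : 1 ≤ ξ) (hξp : ξ < p) (hη : 2 * η ≤ p - 1) :
    phiP p (shatP p ξ η) =
      ((ξ : ℝ) + 1) / (2 * Ap p) *
        ((ξ : ℝ) + ((p : ℝ) - 2 * η) * ((p : ℝ) - 2 * η + 1) / (2 * p * (p + 1))) := by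
  obtain ⟨m, hm⟩ := hodd
  have hp3 : 3 ≤ p := by have := hp.two_le; omega
  have hηm : η ≤ m := by omega
  set c : ℕ := m - η with hcdef
  have hcm : c + η = m := by omega
  -- real facts
  have hp0 : (0:ℝ) < p := by positivity
  have hpR : (3:ℝ) ≤ p := by exact_mod_cast hp3
  have hmR : (p:ℝ) = 2 * m + 1 := by exact_mod_cast hm
  have hcR : (c:ℝ) + η = m := by exact_mod_cast hcm
  have hcP : 2 * (c:ℝ) + 1 ≤ p := by
    have : 2 * c + 1 ≤ p := by omega
    exact_mod_cast this
  have hξP : (ξ:ℝ) + 1 ≤ p := by exact_mod_cast hξp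
  have hξ0 : (1:ℝ) ≤ ξ := by exact_mod_cast hξ1
  have hm0 : (0:ℝ) < 2 * (m:ℝ) + 1 := by linarith
  set s : ℝ := shatP p ξ η with hsdef
  have hs : s = ((ξ:ℝ) * p + c) / p ^ 2 + 1 / (2 * p ^ 2) := by
    rw [hsdef, shatP]
    have h1 : (η:ℝ) = (m:ℝ) - c := by linarith
    rw [h1, hmR]
    field_simp
    ring
  -- bounds
  have hs0 : 0 ≤ s := by rw [hs]; positivity
  have hs1 : s < 1 := by
    rw [hs]
    rw [div_add_div _ _ (by positivity) (by positivity), div_lt_one (by positivity)]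
    have h1 : ((ξ:ℝ)*p + c) * 2 ≤ 2*p^2 - p - 1 := by nlinarith
    nlinarith [h1, hp0, mul_pos hp0 hp0]
  have hne : s ≠ 1 := ne_of_lt hs1
  -- floors
  have h0 : ⌊s⌋ = 0 := Int.floor_eq_zero_iff.mpr ⟨hs0, hs1⟩
  have hps : (p:ℝ) * s = (ξ:ℝ) + (2*c+1)/(2*p) := by rw [hs]; field_simp; ring
  have hf1 : ⌊(p:ℝ) * s⌋ = (ξ:ℤ) := by
    rw [Int.floor_eq_iff]
    rw [hps]
    constructor
    · have : 0 < (2*(c:ℝ)+1)/(2*p) := by positivity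
      push_cast; linarith
    · have : (2*(c:ℝ)+1)/(2*p) < 1 := by
        rw [div_lt_one (by positivity)]; linarith
      push_cast; linarith
  -- T k = (p^k - 1)/2
  set T : ℕ → ℕ := fun k => (p ^ k - 1) / 2 with hTdef
  have hT : ∀ k, 2 * T k + 1 = p ^ k := by
    intro k
    obtain ⟨t, ht⟩ := (Odd.pow (n := k) ⟨m, hm⟩)
    simp only [hTdef]
    omega
  have hTR : ∀ k, (T k : ℝ) = ((p:ℝ) ^ k - 1) / 2 := by
    intro k
    have : (2 * (T k : ℝ) + 1) = (p:ℝ) ^ k := by exact_mod_cast hT k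
    linarith
  have hfk : ∀ k : ℕ, ⌊(p:ℝ) ^ (k + 2) * s⌋ = (ξ : ℤ) * p ^ (k+1) + c * p ^ k + T k := by
    intro k
    have heq : (p:ℝ) ^ (k + 2) * s
        = ((((ξ : ℤ) * p ^ (k+1) + c * p ^ k + T k : ℤ) : ℝ)) + 1/2 := by
      rw [hs]
      push_cast [hTR k]
      field_simp
      ring
    rw [heq, add_comm, Int.floor_add_intCast]
    norm_num
  -- digits
  have hb1 : bdig p s 1 = (ξ:ℤ) := by
    rw [bdig]
    norm_num [h0, hf1]
  have hb2 : bdig p s 2 = (c:ℤ) := by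
    rw [bdig]
    have hT0 : T 0 = 0 := by simp [hTdef]
    have h2 := hfk 0
    rw [hT0] at h2
    norm_num at h2
    norm_num [h2, hf1]
    ring
  have hb3 : ∀ k, bdig p s (k + 3) = (m:ℤ) := by
    intro k
    rw [bdig]
    have e1 : k + 3 = (k+1) + 2 := by ring
    have e2 : k + 3 - 1 = k + 2 := by omega
    rw [e1, e2, hfk (k+1), hfk k]
    have A1 : (2:ℤ) * T (k+1) + 1 = (p:ℤ) ^ (k+1) := by exact_mod_cast hT (k+1)
    have A2 : (2:ℤ) * T k + 1 = (p:ℤ) ^ k := by exact_mod_cast hT k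
    have A3 : (p:ℤ) = 2 * m + 1 := by exact_mod_cast hm
    have key : 2 * (((ξ : ℤ) * p ^ (k+1+1) + c * p ^ (k+1) + T (k+1))
        - p * ((ξ : ℤ) * p ^ (k+1) + c * p ^ k + T k)) = 2 * m := by
      linear_combination A1 - (p:ℤ) * A2 + A3
    linarith
  -- products of digits
  have hP0 : ∏ i ∈ Finset.range 1, ((bdig p s (i+1) : ℝ) + 1) = (ξ:ℝ) + 1 := by
    simp [hb1]
  have hP1 : ∏ i ∈ Finset.range 2, ((bdig p s (i+1) : ℝ) + 1) = ((ξ:ℝ) + 1) * ((c:ℝ) + 1) := by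
    rw [Finset.prod_range_succ, hP0, hb2]
    push_cast
    ring
  have hPk : ∀ k, ∏ i ∈ Finset.range (k+3), ((bdig p s (i+1) : ℝ) + 1)
      = ((ξ:ℝ) + 1) * ((c:ℝ) + 1) * ((m:ℝ) + 1) ^ (k+1) := by
    intro k
    induction k with
    | zero =>
        rw [Finset.prod_range_succ, hP1, hb3 0]
        push_cast
        ring
    | succ n ih =>
        have : n + 1 + 3 = (n + 3) + 1 := by ring
        rw [this, Finset.prod_range_succ, ih, hb3 (n+1)]
        push_cast
        ring
  -- the series
  set A : ℝ := Ap p with hAdef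
  have hA : A = (p:ℝ) * (p + 1) / 2 := rfl
  have hA0 : 0 < A := by rw [hA]; positivity
  set f : ℕ → ℝ := fun j =>
    ((bdig p s (j + 1) : ℝ) * ∏ i ∈ Finset.range (j + 1), ((bdig p s (i + 1) : ℝ) + 1))
      / A ^ (j + 1) with hfdef
  have hMA : (m:ℝ) + 1 = A / p := by
    rw [hA, hmR]
    have h : (2*(m:ℝ)+1) ≠ 0 := ne_of_gt hm0
    field_simp
    ring
  set Cst : ℝ := (m:ℝ) * (((ξ:ℝ) + 1) * ((c:ℝ) + 1)) / (A ^ 2 * p) with hCdef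
  have hf2 : ∀ k, f (k + 2) = Cst * (1/(p:ℝ)) ^ k := by
    intro k
    simp only [hfdef, hCdef]
    have e : k + 2 + 1 = k + 3 := by ring
    rw [e, hb3 k, hPk k, hMA]
    rw [div_pow]
    push_cast
    field_simp
    have hpk : (p:ℝ) ^ k * (p:ℝ)⁻¹ ^ k = 1 := by
      rw [← mul_pow, mul_inv_cancel₀ (ne_of_gt hp0), one_pow]
    linear_combination (-(m:ℝ) * A ^ 3 * A ^ k * p) * hpk
  have hr0 : (0:ℝ) ≤ 1/(p:ℝ) := by positivity
  have hr1 : 1/(p:ℝ) < 1 := by rw [div_lt_one hp0]; linarith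
  have hsumtail : Summable (fun k => f (k + 2)) := by
    have : Summable (fun k : ℕ => Cst * (1/(p:ℝ)) ^ k) :=
      (summable_geometric_of_lt_one hr0 hr1).mul_left Cst
    exact this.congr fun k => (hf2 k).symm
  have hsumf : Summable f := (summable_nat_add_iff 2).mp hsumtail
  have hsum1 : Summable (fun j => f (j + 1)) := (summable_nat_add_iff 1).mpr hsumf
  have htail : ∑' k, f (k + 2) = Cst * (1 - 1/(p:ℝ))⁻¹ := by
    rw [tsum_congr hf2, tsum_mul_left, tsum_geometric_of_lt_one hr0 hr1]
  have hsplit : ∑' j, f j = f 0 + (f 1 + ∑' k, f (k + 2)) := by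
    rw [Summable.tsum_eq_zero_add hsumf, Summable.tsum_eq_zero_add hsum1]
  have hf0 : f 0 = (ξ:ℝ) * ((ξ:ℝ) + 1) / A := by
    simp only [hfdef]
    norm_num [hP0, hb1]
  have hf1' : f 1 = (c:ℝ) * (((ξ:ℝ) + 1) * ((c:ℝ) + 1)) / A ^ 2 := by
    simp only [hfdef]
    norm_num [hP1, hb2]
  -- finish
  have hφ : phiP p s = (1/2) * ∑' j, f j := by
    rw [phiP, if_neg hne]
  rw [hφ, hsplit, hf0, hf1', htail, hCdef]
  have hpe : (p:ℝ) - 2 * η = 2 * c + 1 := by linarith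
  rw [hpe]
  have h1p : (1 - 1/(p:ℝ))⁻¹ = p/(p-1) := by
    have : (1 - 1/(p:ℝ)) = (p-1)/p := by field_simp
    rw [this, inv_div]
  have hm2 : (m:ℝ) = ((p:ℝ) - 1) / 2 := by linarith
  rw [hm2, hA]
  have hp1 : (p:ℝ) - 1 ≠ 0 := by linarith
  have hpne : (p:ℝ) ≠ 0 := ne_of_gt hp0
  have hpp1 : (p:ℝ) + 1 ≠ 0 := by linarith
  rw [h1p]
  field_simp
  ring
end

section
/- Let p be an odd prime and let ξ, η be integers with 1 ≤ ξ < p and 0 ≤ η ≤ (p−1)/2. Then G_p(ŝ_p(ξ,η)) = B_{ξ,η}, where B_{ξ,η} := C(ξ+1, 2) · (1 + (p−2η)(p−2η+1)/(2ξp(p+1))) · ((2ξ+1)/2 − η/p)^{−ρ_p}. -/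
open Finset

/-- `B_{ξ,η} = C(ξ+1,2) (1 + (p−2η)(p−2η+1)/(2ξp(p+1))) ((2ξ+1)/2 − η/p)^{−ρ_p}`. -/
noncomputable def Bval (p ξ η : ℕ) : ℝ :=
  (Nat.choose (ξ + 1) 2 : ℝ) *
    (1 + ((p : ℝ) - 2 * η) * ((p : ℝ) - 2 * η + 1) / (2 * ξ * p * (p + 1))) *
    ((2 * ξ + 1) / 2 - (η : ℝ) / p) ^ (-(rhoP p))

set_option maxHeartbeats 2000000 in
/-- For an odd prime `p` and `1 ≤ ξ < p`, `0 ≤ η ≤ (p−1)/2`: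
`G_p(ŝ_p(ξ,η)) = B_{ξ,η}`. -/
theorem Gp_shat (p : ℕ) (hp : p.Prime) (hodd : Odd p) (ξ η : ℕ)
    (hξ1 : 1 ≤ ξ) (hξp : ξ < p) (hη : 2 * η ≤ p - 1) :
    Gp p (shatP p ξ η) = Bval p ξ η := by
  obtain ⟨c, hc⟩ := hodd
  have hp2 : 2 ≤ p := hp.two_le
  have hc1 : 1 ≤ c := by omega
  have hηc : η ≤ c := by omega
  set s : ℝ := shatP p ξ η with hsdef
  have hP : (p : ℝ) = 2 * c + 1 := by exact_mod_cast congrArg (Nat.cast : ℕ → ℝ) hc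
  have hC1 : (1:ℝ) ≤ c := by exact_mod_cast hc1
  have hP3 : (3:ℝ) ≤ p := by rw [hP]; push_cast; linarith
  have hP0 : (0:ℝ) < p := by linarith
  have hPne : (p:ℝ) ≠ 1 := by linarith
  have hP1 : (p:ℝ) - 1 ≠ 0 := by linarith
  have hX1 : (1:ℝ) ≤ ξ := by exact_mod_cast hξ1
  have hXP : (ξ:ℝ) + 1 ≤ p := by exact_mod_cast hξp
  have hE0 : (0:ℝ) ≤ η := by positivity
  have hEC : (η:ℝ) ≤ c := by exact_mod_cast hηc
  have hs : s = (2 * ξ + 1) / (2 * p) - η / (p:ℝ) ^ 2 := rfl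
  have hCP : (c:ℝ) = ((p:ℝ) - 1) / 2 := by rw [hP]; push_cast; ring
  -- real value of p^(j+2) * s
  have hval : ∀ j : ℕ, (p:ℝ) ^ (j + 2) * s =
      ((ξ * p ^ (j+1) + c * (∑ i ∈ range (j+1), (p:ℤ) ^ i) - η * p ^ j : ℤ) : ℝ) + 1/2 := by
    intro j
    have hg : ∑ i ∈ range (j+1), (p:ℝ) ^ i = ((p:ℝ) ^ (j+1) - 1) / ((p:ℝ) - 1) :=
      geom_sum_eq hPne (j+1)
    push_cast
    rw [hg, hs, hCP]
    field_simp
    ring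
  have hfl : ∀ j : ℕ, ⌊(p:ℝ) ^ (j + 2) * s⌋ =
      (ξ * p ^ (j+1) + c * (∑ i ∈ range (j+1), (p:ℤ) ^ i) - η * p ^ j : ℤ) := by
    intro j
    rw [hval j, add_comm, Int.floor_add_intCast]
    norm_num
  have hsval : s = ((p:ℝ) * (2 * ξ + 1) - 2 * η) / (2 * (p:ℝ)^2) := by
    rw [hs]; field_simp
  have h0 : ⌊(p:ℝ) ^ (0:ℕ) * s⌋ = 0 := by
    rw [pow_zero, one_mul, hsval, Int.floor_eq_iff]
    push_cast
    constructor
    · apply div_nonneg _ (by positivity)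
      nlinarith
    · rw [div_lt_iff₀ (by positivity)]
      nlinarith
  have h1 : ⌊(p:ℝ) ^ (1:ℕ) * s⌋ = ξ := by
    have hv : (p:ℝ) ^ (1:ℕ) * s = (ξ:ℝ) + ((p:ℝ) - 2 * η) / (2 * p) := by
      rw [pow_one, hsval]; field_simp; ring
    rw [hv, Int.floor_eq_iff]
    push_cast
    constructor
    · nlinarith [div_nonneg (by nlinarith : (0:ℝ) ≤ (p:ℝ) - 2*η) (by positivity : (0:ℝ) ≤ 2*(p:ℝ))]
    · have : ((p:ℝ) - 2 * η) / (2 * p) < 1 := by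
        rw [div_lt_one (by positivity)]; nlinarith
      linarith
  -- digit values
  have h0' : ⌊s⌋ = 0 := by simpa using h0
  have h1' : ⌊(p:ℝ) * s⌋ = ξ := by simpa using h1
  have hb1 : bdig p s 1 = ξ := by
    unfold bdig
    norm_num [h0', h1']
  have hb2 : bdig p s 2 = (c:ℤ) - η := by
    unfold bdig
    have e2 : ⌊(p:ℝ) ^ (2:ℕ) * s⌋ = (ξ * p ^ 1 + c * (∑ i ∈ range 1, (p:ℤ) ^ i) - η * p ^ 0 : ℤ) := hfl 0
    norm_num at e2 ⊢
    rw [e2, h1']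
    ring
  have hb3 : ∀ j : ℕ, bdig p s (j + 3) = c := by
    intro j
    unfold bdig
    have e1 : ⌊(p:ℝ) ^ (j + 3) * s⌋ =
        (ξ * p ^ (j+2) + c * (∑ i ∈ range (j+2), (p:ℤ) ^ i) - η * p ^ (j+1) : ℤ) := hfl (j+1)
    have e2 : ⌊(p:ℝ) ^ (j + 3 - 1) * s⌋ =
        (ξ * p ^ (j+1) + c * (∑ i ∈ range (j+1), (p:ℤ) ^ i) - η * p ^ j : ℤ) := hfl j
    rw [e1, e2, geom_sum_succ]
    push_cast
    ring
  -- products and series terms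
  have hA : Ap p = (p:ℝ) * ((p:ℝ) + 1) / 2 := rfl
  have hA0 : 0 < Ap p := by rw [hA]; positivity
  have hApc : Ap p = (p:ℝ) * ((c:ℝ) + 1) := by rw [hA, hCP]; ring
  set F : ℕ → ℝ := fun j =>
      ((bdig p s (j + 1) : ℝ) * ∏ i ∈ Finset.range (j + 1), ((bdig p s (i + 1) : ℝ) + 1))
        / (Ap p) ^ (j + 1) with hFdef
  have hprod1 : ∏ i ∈ range 2, ((bdig p s (i+1) : ℝ) + 1) = ((ξ:ℝ)+1) * ((c:ℝ) - η + 1) := by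
    rw [Finset.prod_range_succ, Finset.prod_range_one, hb1, hb2]
    push_cast
    ring
  have hprod : ∀ j : ℕ, ∏ i ∈ range (j+3), ((bdig p s (i+1) : ℝ) + 1)
      = ((ξ:ℝ)+1) * ((c:ℝ) - η + 1) * ((c:ℝ)+1)^(j+1) := by
    intro j
    induction j with
    | zero =>
      rw [Finset.prod_range_succ, hprod1, hb3 0]
      push_cast; ring
    | succ k ih =>
      rw [Finset.prod_range_succ, ih, hb3 (k+1)]
      push_cast; ring
  have hF0 : F 0 = (ξ:ℝ) * ((ξ:ℝ)+1) / (Ap p) := by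
    have e : F 0 = ((bdig p s (0+1) : ℝ) * ∏ i ∈ range (0+1), ((bdig p s (i+1):ℝ)+1)) / (Ap p)^(0+1) := rfl
    rw [show (0:ℕ)+1 = 1 from rfl] at e
    rw [e, Finset.prod_range_one, hb1, pow_one]
    push_cast
    ring
  have hF1 : F 1 = ((c:ℝ) - η) * (((ξ:ℝ)+1) * ((c:ℝ) - η + 1)) / (Ap p)^2 := by
    have e : F 1 = ((bdig p s (1+1) : ℝ) * ∏ i ∈ range (1+1), ((bdig p s (i+1):ℝ)+1)) / (Ap p)^(1+1) := rfl
    rw [show (1:ℕ)+1 = 2 from rfl] at e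
    rw [e, hprod1, hb2]
    push_cast
    ring
  set M : ℝ := (c:ℝ) * (((ξ:ℝ)+1) * ((c:ℝ) - η + 1)) / (Ap p)^2 with hMdef
  have hF2 : ∀ j : ℕ, F (j+2) = (M * ((p:ℝ))⁻¹) * (((p:ℝ))⁻¹)^j := by
    intro j
    have e : F (j+2) = ((bdig p s (j+2+1) : ℝ) * ∏ i ∈ range (j+2+1), ((bdig p s (i+1):ℝ)+1))
        / (Ap p)^(j+2+1) := rfl
    rw [show j+2+1 = j+3 by omega] at e
    have hApow : (Ap p) ^ (j+3) = (p:ℝ)^(j+1) * ((c:ℝ)+1)^(j+1) * (Ap p)^2 := by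
      rw [show j+3 = (j+1)+2 by ring, pow_add, hApc, mul_pow]
    have hR : (M * (p:ℝ)⁻¹) * ((p:ℝ)⁻¹)^j = M / ((p:ℝ)^(j+1)) := by
      rw [inv_pow, div_eq_mul_inv, pow_succ, mul_inv]
      ring
    rw [e, hprod j, hb3 j, hApow, hR, hMdef, div_div]
    rw [div_eq_div_iff (by positivity) (by positivity)]
    push_cast
    ring
  -- summability and tsum
  have hr0 : (0:ℝ) ≤ (p:ℝ)⁻¹ := by positivity
  have hr1 : (p:ℝ)⁻¹ < 1 := by
    rw [inv_lt_one_iff₀]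
    right; linarith
  have hsum2 : Summable (fun j => F (j+2)) := by
    have hfun : (fun j => F (j+2)) = fun j => (M * (p:ℝ)⁻¹) * ((p:ℝ)⁻¹)^j := funext hF2
    rw [hfun]
    exact (summable_geometric_of_lt_one hr0 hr1).mul_left _
  have hsumF : Summable F := by
    rw [← summable_nat_add_iff 2]
    exact hsum2
  have htail : ∑' j : ℕ, F (j+2) = (M * (p:ℝ)⁻¹) * (1 - (p:ℝ)⁻¹)⁻¹ := by
    rw [tsum_congr hF2, tsum_mul_left, tsum_geometric_of_lt_one hr0 hr1]
  have htsum : ∑' j : ℕ, F j = F 0 + F 1 + ∑' j : ℕ, F (j+2) := by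
    rw [← hsumF.sum_add_tsum_nat_add 2, Finset.sum_range_succ, Finset.sum_range_one]
  -- phiP value
  have hslt1 : s < 1 := by
    rw [hsval, div_lt_one (by positivity)]
    nlinarith
  have hs1 : s ≠ 1 := ne_of_lt hslt1
  have hphi : phiP p s = (1/2) * ∑' j : ℕ, F j := by
    unfold phiP
    rw [if_neg hs1, ← hFdef]
  -- rpow facts
  have hprho : (p:ℝ) ^ (rhoP p) = Ap p := by
    rw [Real.rpow_def_of_pos hP0, rhoP, mul_div_assoc', mul_comm,
      mul_div_assoc, div_self (ne_of_gt (Real.log_pos (by linarith))), mul_one,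
      Real.exp_log hA0]
  have ht0 : (0:ℝ) < (2 * ξ + 1) / 2 - (η:ℝ) / p := by
    have hEp : (η:ℝ)/p < 1 := by rw [div_lt_one hP0]; linarith
    have : (1:ℝ) ≤ (2 * (ξ:ℝ) + 1) / 2 - 1/2 := by linarith
    have h2 : (η:ℝ)/p < 1/2 := by rw [div_lt_iff₀ hP0]; nlinarith
    linarith
  have hsrpow : s ^ (-(rhoP p)) = ((2 * ξ + 1) / 2 - (η:ℝ) / p) ^ (-(rhoP p)) * Ap p := by
    have hst : s = ((2 * (ξ:ℝ) + 1) / 2 - (η:ℝ) / p) / p := by rw [hs]; field_simp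
    rw [hst, Real.div_rpow ht0.le hP0.le, Real.rpow_neg hP0.le, hprho, div_eq_mul_inv, inv_inv]
  -- final algebra
  have key : Ap p * ((1/2) * ((ξ:ℝ) * ((ξ:ℝ)+1) / (Ap p)
      + ((c:ℝ) - η) * (((ξ:ℝ)+1) * ((c:ℝ) - η + 1)) / (Ap p)^2
      + ((c:ℝ) * (((ξ:ℝ)+1) * ((c:ℝ) - η + 1)) / (Ap p)^2 * (p:ℝ)⁻¹) * (1 - (p:ℝ)⁻¹)⁻¹))
      = (Nat.choose (ξ+1) 2 : ℝ) *
        (1 + ((p : ℝ) - 2 * η) * ((p : ℝ) - 2 * η + 1) / (2 * ξ * (p:ℝ) * ((p:ℝ) + 1))) := by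
    rw [Nat.cast_choose_two]
    push_cast
    rw [hCP, hA]
    have h1p : 1 - (p:ℝ)⁻¹ = ((p:ℝ)-1)/p := by field_simp
    rw [h1p]
    have hX0 : (ξ:ℝ) ≠ 0 := by linarith
    field_simp
    ring
  rw [show Gp p s = s ^ (-(rhoP p)) * phiP p s from rfl]
  rw [hphi, htsum, htail, hF0, hF1, hMdef, hsrpow]
  rw [show Bval p ξ η = (Nat.choose (ξ + 1) 2 : ℝ) *
    (1 + ((p : ℝ) - 2 * η) * ((p : ℝ) - 2 * η + 1) / (2 * ξ * p * (p + 1))) *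
    ((2 * ξ + 1) / 2 - (η : ℝ) / p) ^ (-(rhoP p)) from rfl]
  linear_combination (((2 * (ξ:ℝ) + 1) / 2 - (η:ℝ) / p) ^ (-(rhoP p))) * key
end

section
/- Let p be an odd prime, and fix integers M ≥ 1 and 1 ≤ m < p^M. Then for every integer k ≥ 0 and every t ∈ [0,1], p^k · (φ_p(θ_k(t)) − φ_p(μ)) = τ_M · (φ_p(t) − φ_p(1/2)). -/
open Finset

/-- `adig p m M i` is the digit `a_i` (for `1 ≤ i ≤ M`) in the base-`p` expansion
`m = a_1 p^{M-1} + ⋯ + a_{M-1} p + a_M`. -/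
def adig (p m M i : ℕ) : ℕ := m / p ^ (M - i) % p

/-- `τ_M = (∏_{i=1}^M (1 + a_i)) / A_p^M`. -/
noncomputable def tauM (p m M : ℕ) : ℝ :=
  (∏ i ∈ Finset.Icc 1 M, ((adig p m M i : ℝ) + 1)) / (Ap p) ^ M

/-- `μ = (m + 1/2)/p^M`. -/
noncomputable def muP (p m M : ℕ) : ℝ := ((m : ℝ) + 1 / 2) / (p : ℝ) ^ M

/-- `θ_k(t) = m/p^M + ∑_{j=M+1}^{M+k} (p−1)/(2p^j) + t/p^{M+k}`. -/
noncomputable def thetaP (p m M k : ℕ) (t : ℝ) : ℝ :=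
  (m : ℝ) / (p : ℝ) ^ M
    + ∑ j ∈ Finset.Icc (M + 1) (M + k), ((p : ℝ) - 1) / (2 * (p : ℝ) ^ j)
    + t / (p : ℝ) ^ (M + k)

set_option linter.unusedSectionVars false

namespace MagAux

noncomputable def ft (p : ℕ) (x : ℝ) (j : ℕ) : ℝ :=
  ((bdig p x (j + 1) : ℝ) * ∏ i ∈ Finset.range (j + 1), ((bdig p x (i + 1) : ℝ) + 1))
    / (Ap p) ^ (j + 1)

lemma phiP_eq {p : ℕ} {x : ℝ} (hx : x ≠ 1) : phiP p x = (1 / 2) * ∑' j, ft p x j := by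
  rw [phiP, if_neg hx]; rfl

lemma phiP_one {p : ℕ} : phiP p 1 = 1 := by simp [phiP]

lemma Ap_pos {p : ℕ} (hp : 1 ≤ p) : 0 < Ap p := by
  have : (1:ℝ) ≤ p := by exact_mod_cast hp
  unfold Ap; nlinarith

lemma bdig_nonneg {p : ℕ} (hp : 1 ≤ p) (x : ℝ) (j : ℕ) : 0 ≤ bdig p x (j + 1) := by
  have hp' : (0:ℝ) ≤ p := by positivity
  unfold bdig
  simp only [Nat.add_sub_cancel]
  have h : (((p : ℤ) * ⌊(p:ℝ)^j * x⌋ : ℤ) : ℝ) ≤ (p:ℝ)^(j+1) * x := by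
    push_cast
    have h2 := Int.floor_le ((p:ℝ)^j * x)
    have e : (p:ℝ)^(j+1)*x = (p:ℝ)*((p:ℝ)^j*x) := by ring
    rw [e]
    exact mul_le_mul_of_nonneg_left h2 hp'
  have := Int.le_floor.2 h
  omega

lemma bdig_lt {p : ℕ} (hp : 1 ≤ p) (x : ℝ) (j : ℕ) : bdig p x (j + 1) < p := by
  have hp' : (0:ℝ) < p := by exact_mod_cast hp
  unfold bdig
  simp only [Nat.add_sub_cancel]
  have h : (p:ℝ)^(j+1) * x < (((p : ℤ) * ⌊(p:ℝ)^j * x⌋ + p : ℤ) : ℝ) := by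
    push_cast
    have h2 := Int.lt_floor_add_one ((p:ℝ)^j * x)
    have e : (p:ℝ)^(j+1)*x = (p:ℝ)*((p:ℝ)^j*x) := by ring
    rw [e]
    have := mul_lt_mul_of_pos_left h2 hp'
    nlinarith
  have := Int.floor_lt.2 h
  omega

lemma ft_summable {p : ℕ} (hp : 3 ≤ p) (x : ℝ) : Summable (ft p x) := by
  have hp1 : 1 ≤ p := by omega
  have hpR : (3:ℝ) ≤ p := by exact_mod_cast hp
  have hA : 0 < Ap p := Ap_pos hp1
  have hb0 : ∀ i : ℕ, (0:ℝ) ≤ (bdig p x (i+1) : ℝ) := by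
    intro i; exact_mod_cast bdig_nonneg hp1 x i
  have hb : ∀ i : ℕ, ((bdig p x (i+1) : ℝ) + 1) ≤ p := by
    intro i
    have h1 : bdig p x (i+1) + 1 ≤ (p : ℤ) := by have := bdig_lt hp1 x i; omega
    exact_mod_cast h1
  have hnn : ∀ j, 0 ≤ ft p x j := by
    intro j
    apply div_nonneg _ (by positivity)
    apply mul_nonneg (hb0 j)
    apply Finset.prod_nonneg
    intro i _
    have := hb0 i; linarith
  have hle : ∀ j, ft p x j ≤ (p:ℝ) * (1/2)^j := by
    intro j
    have hnum : (bdig p x (j+1) : ℝ) * ∏ i ∈ Finset.range (j + 1), ((bdig p x (i + 1) : ℝ) + 1)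
        ≤ (p:ℝ) * (p:ℝ)^(j+1) := by
      apply mul_le_mul
      · have := hb j; linarith
      · calc ∏ i ∈ Finset.range (j + 1), ((bdig p x (i + 1) : ℝ) + 1)
            ≤ ∏ _i ∈ Finset.range (j + 1), (p:ℝ) :=
              Finset.prod_le_prod (fun i _ => by have := hb0 i; linarith) (fun i _ => hb i)
          _ = (p:ℝ)^(j+1) := by simp
      · exact Finset.prod_nonneg fun i _ => by have := hb0 i; linarith
      · positivity
    have hAp : (p:ℝ)/Ap p ≤ 1/2 := by
      rw [div_le_div_iff₀ hA (by norm_num)]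
      unfold Ap; nlinarith
    have step1 : ft p x j ≤ ((p:ℝ) * (p:ℝ)^(j+1)) / (Ap p)^(j+1) :=
      div_le_div_of_nonneg_right hnum (by positivity) |>.trans_eq rfl
    calc ft p x j ≤ ((p:ℝ) * (p:ℝ)^(j+1)) / (Ap p)^(j+1) := step1
      _ = (p:ℝ) * ((p:ℝ)/Ap p)^(j+1) := by rw [div_pow]; ring
      _ ≤ (p:ℝ) * (1/2)^(j+1) := by
          apply mul_le_mul_of_nonneg_left _ (by positivity)
          exact pow_le_pow_left₀ (by positivity) hAp _
      _ ≤ (p:ℝ) * (1/2)^j := by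
          apply mul_le_mul_of_nonneg_left _ (by positivity)
          exact pow_le_pow_of_le_one (by norm_num) (by norm_num) (by omega)
  exact Summable.of_nonneg_of_le hnn hle
    ((summable_geometric_of_lt_one (by norm_num) (by norm_num)).mul_left _)

lemma bdig_step_zero {p : ℕ} (hp : 1 ≤ p) (r : ℕ) (hr : r < p) {s : ℝ}
    (hs0 : 0 ≤ s) (hs1 : s < 1) : bdig p (((r:ℝ) + s) / p) 1 = r := by
  have hp' : (0:ℝ) < p := by exact_mod_cast hp
  unfold bdig
  have e1 : (p:ℝ)^1 * (((r:ℝ) + s) / p) = s + (r:ℤ) := by push_cast; field_simp; ring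
  have e0 : ⌊(p:ℝ)^(1-1) * (((r:ℝ) + s) / p)⌋ = 0 := by
    rw [pow_zero, one_mul]
    apply Int.floor_eq_zero_iff.2
    constructor
    · positivity
    · rw [div_lt_one hp']
      have : (r:ℝ) + 1 ≤ p := by exact_mod_cast hr
      linarith
  rw [e1, e0, Int.floor_add_intCast, Int.floor_eq_zero_iff.2 ⟨hs0, hs1⟩]
  ring

lemma bdig_step_succ {p : ℕ} (hp : 1 ≤ p) (r : ℕ) (s : ℝ) (j : ℕ) :
    bdig p (((r:ℝ) + s) / p) (j + 2) = bdig p s (j + 1) := by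
  have hp' : (0:ℝ) < p := by exact_mod_cast hp
  unfold bdig
  simp only [show j + 2 - 1 = j + 1 from by omega, show j + 1 - 1 = j from by omega]
  have e1 : (p:ℝ)^(j+2) * (((r:ℝ) + s) / p) = (p:ℝ)^(j+1) * s + ((r * p^(j+1) : ℤ) : ℝ) := by
    push_cast; field_simp; ring
  have e2 : (p:ℝ)^(j+1) * (((r:ℝ) + s) / p) = (p:ℝ)^j * s + ((r * p^j : ℤ) : ℝ) := by
    push_cast; field_simp; ring
  rw [e1, e2, Int.floor_add_intCast, Int.floor_add_intCast]
  push_cast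
  ring

lemma phi_step {p : ℕ} (hp : 3 ≤ p) (r : ℕ) (hr : r < p) {s : ℝ}
    (hs0 : 0 ≤ s) (hs1 : s < 1) :
    phiP p (((r:ℝ) + s) / p) = ((r:ℝ) * ((r:ℝ) + 1) / 2) / Ap p
      + (((r:ℝ) + 1) / Ap p) * phiP p s := by
  have hp1 : 1 ≤ p := by omega
  have hp' : (0:ℝ) < p := by exact_mod_cast hp1
  have hA : 0 < Ap p := Ap_pos hp1
  set x := ((r:ℝ) + s) / p with hx
  have hx1 : x < 1 := by
    rw [hx, div_lt_one hp']
    have : (r:ℝ) + 1 ≤ p := by exact_mod_cast hr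
    linarith
  have hxne : x ≠ 1 := ne_of_lt hx1
  have hsne : s ≠ 1 := ne_of_lt hs1
  have hd0 : bdig p x 1 = r := bdig_step_zero hp1 r hr hs0 hs1
  have hds : ∀ j : ℕ, bdig p x (j + 2) = bdig p s (j + 1) := bdig_step_succ hp1 r s
  have hft0 : ft p x 0 = (r:ℝ) * ((r:ℝ) + 1) / Ap p := by
    unfold ft
    simp [hd0]
  have hfts : ∀ j : ℕ, ft p x (j + 1) = (((r:ℝ) + 1) / Ap p) * ft p s j := by
    intro j
    unfold ft
    have hprod : ∏ i ∈ Finset.range (j + 2), ((bdig p x (i + 1) : ℝ) + 1)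
        = ((r:ℝ) + 1) * ∏ i ∈ Finset.range (j + 1), ((bdig p s (i + 1) : ℝ) + 1) := by
      rw [Finset.prod_range_succ']
      simp only [hd0]
      rw [mul_comm]
      congr 1
      apply Finset.prod_congr rfl
      intro i _
      rw [hds i]
    have e : (j + 1 + 1) = j + 2 := rfl
    rw [e, hprod, hds j]
    have hAne : Ap p ≠ 0 := ne_of_gt hA
    field_simp
    ring
  have hsum : ∑' j, ft p x j = ft p x 0 + ∑' j, ft p x (j + 1) :=
    Summable.tsum_eq_zero_add (ft_summable hp x)
  rw [phiP_eq hxne, phiP_eq hsne, hsum, hft0]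
  have : ∑' j, ft p x (j + 1) = (((r:ℝ) + 1) / Ap p) * ∑' j, ft p s j := by
    rw [← tsum_mul_left]
    exact tsum_congr hfts
  rw [this]
  ring

noncomputable def Pp (p : ℕ) : ℕ → ℕ → ℝ
  | _, 0 => 1
  | n, N+1 => ((n % p : ℕ) + 1 : ℝ) * Pp p (n / p) N

noncomputable def Qp (p : ℕ) : ℕ → ℕ → ℝ
  | _, 0 => 0
  | n, N+1 => Qp p (n / p) N
      + ((n % p : ℕ) : ℝ) * (((n % p : ℕ) : ℝ) + 1) / 2 * Pp p (n / p) N / Ap p ^ (N + 1)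

lemma phiP_zero {p : ℕ} : phiP p 0 = 0 := by
  rw [phiP_eq (by norm_num)]
  have : ∀ j : ℕ, ft p 0 j = 0 := by
    intro j
    unfold ft
    have : bdig p 0 (j+1) = 0 := by unfold bdig; simp
    rw [this]
    simp
  rw [tsum_congr this]
  simp

lemma phi_split {p : ℕ} (hp : 3 ≤ p) (N : ℕ) : ∀ (n : ℕ) (s : ℝ), n < p ^ N → 0 ≤ s → s < 1 →
    phiP p (((n:ℝ) + s) / (p:ℝ) ^ N) = Qp p n N + Pp p n N / Ap p ^ N * phiP p s := by
  have hp1 : 1 ≤ p := by omega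
  have hp' : (0:ℝ) < p := by exact_mod_cast hp1
  have hA : 0 < Ap p := Ap_pos hp1
  induction N with
  | zero =>
    intro n s hn hs0 hs1
    have hn0 : n = 0 := by simpa using hn
    subst hn0
    have e : (((0:ℕ):ℝ) + s) / (p:ℝ) ^ 0 = s := by norm_num
    rw [e]
    show phiP p s = 0 + 1 / Ap p ^ 0 * phiP p s
    norm_num
  | succ N ih =>
    intro n s hn hs0 hs1
    have hp0 : 0 < p := hp1
    set q := n / p with hq
    set r := n % p with hr
    have hrp : r < p := Nat.mod_lt _ hp0
    have hqN : q < p ^ N := by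
      rw [hq, Nat.div_lt_iff_lt_mul hp0]
      calc n < p ^ (N+1) := hn
        _ = p ^ N * p := pow_succ p N
    have hnqr : n = p * q + r := by rw [hq, hr]; exact (Nat.div_add_mod n p).symm
    have hnr : (n:ℝ) = p * q + r := by
      rw [hnqr]; push_cast; ring
    have hs0' : (0:ℝ) ≤ ((r:ℝ) + s) / p := by positivity
    have hs1' : ((r:ℝ) + s) / p < 1 := by
      rw [div_lt_one hp']
      have : (r:ℝ) + 1 ≤ p := by exact_mod_cast hrp
      linarith
    have hrw : ((n:ℝ) + s) / (p:ℝ) ^ (N+1) = ((q:ℝ) + ((r:ℝ) + s) / p) / (p:ℝ) ^ N := by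
      rw [hnr]
      field_simp
      ring
    rw [hrw, ih q (((r:ℝ) + s) / p) hqN hs0' hs1', phi_step hp r hrp hs0 hs1]
    show _ = Qp p q N + (r:ℝ) * ((r:ℝ) + 1) / 2 * Pp p q N / Ap p ^ (N+1)
        + ((r:ℝ) + 1) * Pp p q N / Ap p ^ (N+1) * phiP p s
    have hAne : Ap p ≠ 0 := ne_of_gt hA
    field_simp
    ring

lemma Q_telescope {p : ℕ} (hp : 3 ≤ p) (N : ℕ) : ∀ n : ℕ, n + 1 < p ^ N →
    Qp p (n+1) N = Qp p n N + Pp p n N / Ap p ^ N := by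
  have hp1 : 1 ≤ p := by omega
  have hp' : (0:ℝ) < p := by exact_mod_cast hp1
  have hA : 0 < Ap p := Ap_pos hp1
  have hAne : Ap p ≠ 0 := ne_of_gt hA
  induction N with
  | zero => intro n hn; simp at hn
  | succ N ih =>
    intro n hn
    have hp0 : 0 < p := hp1
    set q := n / p with hq
    set r := n % p with hr
    have hrp : r < p := Nat.mod_lt _ hp0
    have hnqr : n = p * q + r := by rw [hq, hr]; exact (Nat.div_add_mod n p).symm
    rcases Nat.lt_or_ge (r + 1) p with hlt | hge
    · have hn1 : n + 1 = p * q + (r + 1) := by omega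
      have e1 : (n + 1) / p = q := by
        rw [hn1, Nat.mul_add_div hp0, Nat.div_eq_of_lt hlt, add_zero]
      have e2 : (n + 1) % p = r + 1 := by
        rw [hn1, Nat.mul_add_mod, Nat.mod_eq_of_lt hlt]
      show Qp p ((n+1)/p) N
          + (((n+1) % p : ℕ) : ℝ) * ((((n+1) % p : ℕ) : ℝ) + 1) / 2 * Pp p ((n+1)/p) N / Ap p ^ (N+1)
          = (Qp p (n/p) N
            + ((n % p : ℕ) : ℝ) * (((n % p : ℕ) : ℝ) + 1) / 2 * Pp p (n/p) N / Ap p ^ (N+1))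
          + ((n % p : ℕ) + 1 : ℝ) * Pp p (n/p) N / Ap p ^ (N+1)
      rw [e1, e2, ← hq, ← hr]
      push_cast
      field_simp
      ring
    · have hre : r + 1 = p := by omega
      have hd : p * (q + 1) = p * q + p := by ring
      have hn1 : n + 1 = p * (q + 1) := by omega
      have e1 : (n + 1) / p = q + 1 := by rw [hn1, Nat.mul_div_cancel_left _ hp0]
      have e2 : (n + 1) % p = 0 := by rw [hn1]; exact Nat.mul_mod_right p (q+1)
      have hq1 : q + 1 < p ^ N := by
        have : p * (q + 1) < p * p ^ N := by
          rw [← hn1]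
          calc n + 1 < p ^ (N+1) := hn
            _ = p * p ^ N := by rw [pow_succ]; ring
        exact Nat.lt_of_mul_lt_mul_left this
      have hih := ih (q) hq1
      show Qp p ((n+1)/p) N
          + (((n+1) % p : ℕ) : ℝ) * ((((n+1) % p : ℕ) : ℝ) + 1) / 2 * Pp p ((n+1)/p) N / Ap p ^ (N+1)
          = (Qp p (n/p) N
            + ((n % p : ℕ) : ℝ) * (((n % p : ℕ) : ℝ) + 1) / 2 * Pp p (n/p) N / Ap p ^ (N+1))
          + ((n % p : ℕ) + 1 : ℝ) * Pp p (n/p) N / Ap p ^ (N+1)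
      rw [e1, e2, ← hq, ← hr, hih]
      have hrR : (r:ℝ) = (p:ℝ) - 1 := by
        have : ((r:ℕ):ℝ) + 1 = ((p:ℕ):ℝ) := by exact_mod_cast congrArg (Nat.cast : ℕ → ℝ) hre
        linarith
      rw [hrR]
      simp only [Nat.cast_zero]
      have hApe : Ap p = (p:ℝ) * ((p:ℝ) + 1) / 2 := rfl
      field_simp
      rw [hApe]
      ring

lemma Pp_pow_sub_one {p : ℕ} (hp : 1 ≤ p) : ∀ N : ℕ, Pp p (p ^ N - 1) N = (p:ℝ) ^ N := by
  intro N
  induction N with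
  | zero => simp [Pp]
  | succ N ih =>
    have hp0 : 0 < p := hp
    have hP : 1 ≤ p ^ N := Nat.one_le_pow _ _ hp0
    have h1 : p * (p ^ N - 1) = p * p ^ N - p := by rw [Nat.mul_sub, mul_one]
    have h2 : p ≤ p * p ^ N := Nat.le_mul_of_pos_right p hP
    have hpow : p ^ (N+1) = p * p ^ N := by rw [pow_succ]; ring
    have key : p ^ (N+1) - 1 = p * (p ^ N - 1) + (p - 1) := by omega
    have e1 : (p ^ (N+1) - 1) / p = p ^ N - 1 := by
      rw [key, Nat.mul_add_div hp0, Nat.div_eq_of_lt (by omega), add_zero]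
    have e2 : (p ^ (N+1) - 1) % p = p - 1 := by
      rw [key, Nat.mul_add_mod, Nat.mod_eq_of_lt (by omega)]
    show ((((p ^ (N+1) - 1) % p : ℕ) : ℝ) + 1) * Pp p ((p ^ (N+1) - 1) / p) N = (p:ℝ) ^ (N+1)
    rw [e1, e2, ih]
    have : (((p - 1 : ℕ)) : ℝ) = (p:ℝ) - 1 := by
      push_cast [Nat.cast_sub hp]
      ring
    rw [this, pow_succ]
    ring

lemma Qp_pow_sub_one {p : ℕ} (hp : 3 ≤ p) : ∀ N : ℕ, Qp p (p ^ N - 1) N = 1 - ((p:ℝ) / Ap p) ^ N := by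
  have hp1 : 1 ≤ p := by omega
  have hA : 0 < Ap p := Ap_pos hp1
  have hAne : Ap p ≠ 0 := ne_of_gt hA
  have hpR : (0:ℝ) < p := by exact_mod_cast hp1
  intro N
  induction N with
  | zero => simp [Qp]
  | succ N ih =>
    have hp0 : 0 < p := hp1
    have hP : 1 ≤ p ^ N := Nat.one_le_pow _ _ hp0
    have h1 : p * (p ^ N - 1) = p * p ^ N - p := by rw [Nat.mul_sub, mul_one]
    have h2 : p ≤ p * p ^ N := Nat.le_mul_of_pos_right p hP
    have hpow : p ^ (N+1) = p * p ^ N := by rw [pow_succ]; ring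
    have key : p ^ (N+1) - 1 = p * (p ^ N - 1) + (p - 1) := by omega
    have e1 : (p ^ (N+1) - 1) / p = p ^ N - 1 := by
      rw [key, Nat.mul_add_div hp0, Nat.div_eq_of_lt (by omega), add_zero]
    have e2 : (p ^ (N+1) - 1) % p = p - 1 := by
      rw [key, Nat.mul_add_mod, Nat.mod_eq_of_lt (by omega)]
    show Qp p ((p ^ (N+1) - 1) / p) N
        + (((p ^ (N+1) - 1) % p : ℕ) : ℝ) * ((((p ^ (N+1) - 1) % p : ℕ) : ℝ) + 1) / 2
          * Pp p ((p ^ (N+1) - 1) / p) N / Ap p ^ (N + 1)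
        = 1 - ((p:ℝ) / Ap p) ^ (N+1)
    rw [e1, e2, ih, Pp_pow_sub_one hp1 N]
    have hc : (((p - 1 : ℕ)) : ℝ) = (p:ℝ) - 1 := by
      push_cast [Nat.cast_sub hp1]
      ring
    rw [hc]
    have hApe : Ap p = (p:ℝ) * ((p:ℝ) + 1) / 2 := rfl
    rw [div_pow, div_pow]
    field_simp
    rw [hApe]
    ring

def Ck (p m : ℕ) : ℕ → ℕ
  | 0 => m
  | k+1 => p * Ck p m k + (p - 1) / 2



section theta

variable {p m M : ℕ} (hp : 3 ≤ p) (hodd : Odd p)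
include hp hodd

lemma w_lt : (p - 1) / 2 < p := by omega

lemma wR : (((p - 1) / 2 : ℕ) : ℝ) = ((p:ℝ) - 1) / 2 := by
  obtain ⟨w, hw⟩ := hodd
  have h1 : (p - 1) / 2 = w := by omega
  rw [h1]
  have : (p:ℝ) = 2 * (w:ℝ) + 1 := by exact_mod_cast congrArg (Nat.cast : ℕ → ℝ) hw
  rw [this]
  ring

lemma theta_rec (k : ℕ) (t : ℝ) :
    thetaP p m M (k+1) t = thetaP p m M k ((((p:ℝ) - 1) / 2 + t) / p) := by
  have hpR : (0:ℝ) < p := by exact_mod_cast (by omega : 0 < p)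
  unfold thetaP
  rw [show M + (k + 1) = (M + k) + 1 from rfl,
    Finset.sum_Icc_succ_top (by omega : M + 1 ≤ M + k + 1)]
  have hpow : (p:ℝ) ^ (M + k + 1) = (p:ℝ) ^ (M + k) * p := by rw [pow_succ]
  field_simp
  ring

lemma theta_eq (k : ℕ) : ∀ t : ℝ, thetaP p m M k t = ((Ck p m k : ℝ) + t) / (p:ℝ) ^ (M + k) := by
  have hpR : (0:ℝ) < p := by exact_mod_cast (by omega : 0 < p)
  induction k with
  | zero =>
    intro t
    unfold thetaP
    rw [show M + 0 = M from rfl]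
    rw [Finset.Icc_eq_empty (by omega), Finset.sum_empty]
    show (m:ℝ) / (p:ℝ)^M + 0 + t / (p:ℝ)^M = ((Ck p m 0 : ℝ) + t) / (p:ℝ)^M
    show (m:ℝ) / (p:ℝ)^M + 0 + t / (p:ℝ)^M = ((m : ℝ) + t) / (p:ℝ)^M
    field_simp
    ring
  | succ k ih =>
    intro t
    rw [theta_rec hp hodd k t, ih ((((p:ℝ) - 1) / 2 + t) / p)]
    have hCk : ((Ck p m (k+1) : ℕ) : ℝ) = p * (Ck p m k : ℝ) + ((p:ℝ) - 1) / 2 := by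
      show ((p * Ck p m k + (p - 1) / 2 : ℕ) : ℝ) = _
      push_cast [wR hp hodd]
      ring
    rw [show M + (k+1) = (M + k) + 1 from rfl, pow_succ, hCk]
    field_simp
    ring

lemma mu_eq (k : ℕ) : muP p m M = ((Ck p m k : ℝ) + 1/2) / (p:ℝ) ^ (M + k) := by
  have hpR : (0:ℝ) < p := by exact_mod_cast (by omega : 0 < p)
  rw [← theta_eq hp hodd k (1/2)]
  induction k with
  | zero =>
    unfold thetaP muP
    rw [show M + 0 = M from rfl, Finset.Icc_eq_empty (by omega), Finset.sum_empty]
    field_simp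
    ring
  | succ k ih =>
    rw [theta_rec hp hodd k (1/2:ℝ)]
    have : (((p:ℝ) - 1) / 2 + 1/2) / p = 1/2 := by field_simp; ring
    rw [this]
    exact ih

lemma Ck_lt (hm2 : m < p ^ M) : ∀ k : ℕ, Ck p m k < p ^ (M + k) := by
  intro k
  induction k with
  | zero => exact hm2
  | succ k ih =>
    show p * Ck p m k + (p - 1) / 2 < p ^ (M + k + 1)
    have h1 : p * Ck p m k ≤ p * (p ^ (M + k) - 1) := Nat.mul_le_mul_left p (by omega)
    have h2 : p * (p ^ (M + k) - 1) = p * p ^ (M + k) - p := by rw [Nat.mul_sub, mul_one]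
    have h3 : p ≤ p * p ^ (M + k) := Nat.le_mul_of_pos_right p (Nat.one_le_pow _ _ (by omega))
    have h4 : p ^ (M + k + 1) = p * p ^ (M + k) := by rw [pow_succ]; ring
    omega

lemma Pp_Ck : ∀ k : ℕ, Pp p (Ck p m k) (M + k) = Pp p m M * (((p:ℝ) + 1) / 2) ^ k := by
  intro k
  induction k with
  | zero => simp [Ck]
  | succ k ih =>
    have hp0 : 0 < p := by omega
    have hwlt : (p - 1) / 2 < p := by omega
    have e0 : Ck p m (k+1) = p * Ck p m k + (p - 1) / 2 := rfl
    have e1 : Ck p m (k+1) / p = Ck p m k := by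
      rw [e0, Nat.mul_add_div hp0, Nat.div_eq_of_lt hwlt, add_zero]
    have e2 : Ck p m (k+1) % p = (p - 1) / 2 := by
      rw [e0, Nat.mul_add_mod, Nat.mod_eq_of_lt hwlt]
    show (((Ck p m (k+1) % p : ℕ) : ℝ) + 1) * Pp p (Ck p m (k+1) / p) (M + k)
        = Pp p m M * (((p:ℝ) + 1) / 2) ^ (k+1)
    rw [e1, e2, ih, wR hp hodd, pow_succ]
    ring

end theta

lemma Pp_eq_prod {p : ℕ} : ∀ (N n : ℕ), Pp p n N = ∏ i ∈ Finset.range N, (((n / p ^ i % p : ℕ) : ℝ) + 1) := by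
  intro N
  induction N with
  | zero => intro n; simp [Pp]
  | succ N ih =>
    intro n
    show (((n % p : ℕ) : ℝ) + 1) * Pp p (n / p) N = _
    rw [ih (n / p), Finset.prod_range_succ']
    have h1 : ∀ i : ℕ, n / p / p ^ i = n / p ^ (i+1) := by
      intro i
      rw [Nat.div_div_eq_div_mul, pow_succ]
      ring_nf
    have h2 : ∏ i ∈ Finset.range N, (((n / p / p ^ i % p : ℕ) : ℝ) + 1)
        = ∏ i ∈ Finset.range N, (((n / p ^ (i+1) % p : ℕ) : ℝ) + 1) := by
      apply Finset.prod_congr rfl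
      intro i _
      rw [h1 i]
    rw [← h2]
    simp [mul_comm]

lemma tauM_eq {p m M : ℕ} : tauM p m M = Pp p m M / Ap p ^ M := by
  unfold tauM
  congr 1
  rw [Pp_eq_prod]
  apply Finset.prod_nbij' (fun i => M - i) (fun j => M - j)
  · intro a ha
    simp only [Finset.mem_Icc] at ha
    simp only [Finset.mem_range]
    omega
  · intro a ha
    simp only [Finset.mem_range] at ha
    simp only [Finset.mem_Icc]
    omega
  · intro a ha
    simp only [Finset.mem_Icc] at ha
    omega
  · intro a ha
    simp only [Finset.mem_range] at ha
    omega
  · intro a ha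
    simp only [Finset.mem_Icc] at ha
    unfold adig
    rfl

end MagAux

/-- For an odd prime `p`, `M ≥ 1`, `1 ≤ m < p^M`, every `k ≥ 0` and `t ∈ [0,1]`:
`p^k (φ_p(θ_k(t)) − φ_p(μ)) = τ_M (φ_p(t) − φ_p(1/2))`. -/
theorem magnifying_phi (p : ℕ) (hp : p.Prime) (hodd : Odd p) (M m : ℕ)
    (hM : 1 ≤ M) (hm1 : 1 ≤ m) (hm2 : m < p ^ M) :
    ∀ k : ℕ, ∀ t ∈ Set.Icc (0 : ℝ) 1,
      (p : ℝ) ^ k * (phiP p (thetaP p m M k t) - phiP p (muP p m M)) =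
        tauM p m M * (phiP p t - phiP p (1 / 2)) := by
  have hp3 : 3 ≤ p := by
    obtain ⟨w, hw⟩ := hodd
    have := hp.two_le
    omega
  have hp1 : 1 ≤ p := by omega
  have hA : 0 < Ap p := MagAux.Ap_pos hp1
  have hAne : Ap p ≠ 0 := ne_of_gt hA
  have hpR : (0:ℝ) < p := by exact_mod_cast hp1
  intro k t ht
  obtain ⟨ht0, ht1⟩ := ht
  have hC := MagAux.Ck_lt hp3 hodd hm2 k
  have hθ := MagAux.theta_eq (m := m) (M := M) hp3 hodd k t
  have hμ := MagAux.mu_eq hp3 hodd (m := m) (M := M) k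
  have hsplitμ : phiP p (muP p m M) = MagAux.Qp p (MagAux.Ck p m k) (M + k)
      + MagAux.Pp p (MagAux.Ck p m k) (M + k) / Ap p ^ (M + k) * phiP p (1/2) := by
    rw [hμ]
    exact MagAux.phi_split hp3 (M + k) (MagAux.Ck p m k) (1/2) hC (by norm_num) (by norm_num)
  have key : (p:ℝ)^k * (((p:ℝ) + 1)/2)^k = Ap p ^ k := by
    rw [← mul_pow]
    congr 1
    unfold Ap
    ring
  have hτ : tauM p m M = (p:ℝ)^k * (MagAux.Pp p (MagAux.Ck p m k) (M + k) / Ap p ^ (M + k)) := by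
    rw [MagAux.tauM_eq, MagAux.Pp_Ck hp3 hodd k, pow_add, ← key]
    have hPne : (0:ℝ) < ((p:ℝ) + 1)/2 := by linarith
    field_simp
  rcases lt_or_eq_of_le ht1 with h1 | h1
  · rw [hθ, MagAux.phi_split hp3 (M + k) (MagAux.Ck p m k) t hC ht0 h1, hsplitμ, hτ]
    ring
  · subst h1
    rcases Nat.lt_or_ge (MagAux.Ck p m k + 1) (p ^ (M + k)) with hlt | hge
    · have hθ1 : phiP p (thetaP p m M k 1) = MagAux.Qp p (MagAux.Ck p m k + 1) (M + k) := by
        rw [hθ]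
        have e : ((MagAux.Ck p m k : ℝ) + 1) / (p:ℝ)^(M + k)
            = (((MagAux.Ck p m k + 1 : ℕ) : ℝ) + 0) / (p:ℝ)^(M + k) := by push_cast; ring
        rw [e, MagAux.phi_split hp3 (M + k) (MagAux.Ck p m k + 1) 0 hlt le_rfl (by norm_num),
          MagAux.phiP_zero, mul_zero, add_zero]
      rw [hθ1, MagAux.Q_telescope hp3 (M + k) (MagAux.Ck p m k) hlt, hsplitμ, hτ, MagAux.phiP_one]
      ring
    · have heq : MagAux.Ck p m k + 1 = p ^ (M + k) := by omega
      have hCk9 : MagAux.Ck p m k = p ^ (M + k) - 1 := by omega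
      have hθ1 : thetaP p m M k 1 = 1 := by
        rw [hθ]
        have e : (MagAux.Ck p m k : ℝ) + 1 = (p:ℝ)^(M + k) := by
          exact_mod_cast congrArg (Nat.cast : ℕ → ℝ) heq
        rw [e]
        field_simp
      rw [hθ1, MagAux.phiP_one, hsplitμ, hτ, hCk9, MagAux.Qp_pow_sub_one hp3,
        MagAux.Pp_pow_sub_one hp1]
      ring
end

section
/- Let p be an odd prime, and fix integers M ≥ 1 and 1 ≤ m < p^M. Then there exists a constant C > 0 such that for every integer k ≥ 0 and every t ∈ [0,1], |p^k · (G_p(θ_k(t)) − G_p(μ)) − μ^{−ρ_p−1} · Q_μ(t)| ≤ C · p^{−k}. -/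
open Finset

/-- `Q_μ(t) = τ_M μ (φ_p(t) − φ_p(1/2)) − ρ_p φ_p(μ) p^{−M} (t − 1/2)`. -/
noncomputable def Qmu (p m M : ℕ) (t : ℝ) : ℝ :=
  tauM p m M * muP p m M * (phiP p t - phiP p (1 / 2))
    - rhoP p * phiP p (muP p m M) / (p : ℝ) ^ M * (t - 1 / 2)

namespace MGaux


def dig (p L N j : ℕ) : ℕ := N / p ^ (L - j) % p

noncomputable def Sfin (p : ℕ) (L N : ℕ) : ℝ :=
  (1 / 2) * ∑ j ∈ Finset.range L,
    ((dig p L N (j + 1) : ℝ) * ∏ i ∈ Finset.range (j + 1), ((dig p L N (i + 1) : ℝ) + 1))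
      / (Ap p) ^ (j + 1)

noncomputable def Pfin (p L N : ℕ) : ℝ :=
  ∏ i ∈ Finset.range L, ((dig p L N (i + 1) : ℝ) + 1)

lemma Ap_pos {p : ℕ} (hp : 1 ≤ p) : 0 < Ap p := by
  have : (1:ℝ) ≤ p := by exact_mod_cast hp
  unfold Ap; nlinarith

lemma dig_append {p : ℕ} (hp : 0 < p) (L N r : ℕ) (hr : r < p) {j : ℕ} (hj : j ≤ L) :
    dig p (L + 1) (N * p + r) j = dig p L N j := by
  unfold dig
  have h1 : L + 1 - j = (L - j) + 1 := by omega
  rw [h1, pow_succ, mul_comm (p ^ (L - j)) p, ← Nat.div_div_eq_div_mul]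
  congr 2
  rw [mul_comm N p, Nat.mul_add_div hp, Nat.div_eq_of_lt hr, add_zero]

lemma dig_last {p : ℕ} (L N r : ℕ) (hr : r < p) :
    dig p (L + 1) (N * p + r) (L + 1) = r := by
  unfold dig
  simp [Nat.mul_add_mod', Nat.mod_eq_of_lt hr]

lemma Pfin_append {p : ℕ} (hp : 0 < p) (L N r : ℕ) (hr : r < p) :
    Pfin p (L + 1) (N * p + r) = Pfin p L N * ((r : ℝ) + 1) := by
  unfold Pfin
  rw [Finset.prod_range_succ, dig_last L N r hr]
  congr 1
  exact Finset.prod_congr rfl fun i hi => by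
    have := Finset.mem_range.mp hi
    rw [dig_append hp L N r hr (by omega)]

lemma Sfin_append {p : ℕ} (hp : 0 < p) (L N r : ℕ) (hr : r < p) :
    Sfin p (L + 1) (N * p + r) =
      Sfin p L N + (1 / 2) * ((r : ℝ) * (Pfin p L N * ((r : ℝ) + 1))) / (Ap p) ^ (L + 1) := by
  unfold Sfin
  rw [Finset.sum_range_succ, mul_add]
  congr 1
  · congr 1
    refine Finset.sum_congr rfl fun j hj => ?_
    have hjL : j + 1 ≤ L := Finset.mem_range.mp hj
    rw [dig_append hp L N r hr hjL]
    congr 2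
    refine Finset.prod_congr rfl fun i hi => ?_
    have := Finset.mem_range.mp hi
    rw [dig_append hp L N r hr (by omega)]
  · rw [dig_last L N r hr]
    have h := Pfin_append hp L N r hr
    unfold Pfin at h
    rw [h]
    unfold Pfin
    ring

lemma Shat_succ {p : ℕ} (hp : 3 ≤ p) :
    ∀ L N : ℕ, N < p ^ L →
      (if N + 1 = p ^ L then (1:ℝ) else Sfin p L (N+1)) = Sfin p L N + Pfin p L N / (Ap p) ^ L := by
  intro L
  induction L with
  | zero =>
    intro N hN
    have : N = 0 := by simpa using hN
    subst this
    simp [Sfin, Pfin]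
  | succ L ih =>
    intro N hN
    have hp0 : 0 < p := by omega
    have hA : (0:ℝ) < Ap p := Ap_pos (by omega)
    have hA0 : Ap p ≠ 0 := ne_of_gt hA
    obtain ⟨q, r, hr, rfl⟩ : ∃ q r, r < p ∧ N = q * p + r :=
      ⟨N / p, N % p, Nat.mod_lt _ hp0, by rw [Nat.div_add_mod' N p]⟩
    have hq : q < p ^ L := by
      have h2 := Nat.pow_succ p L ▸ hN
      by_contra h
      push_neg at h
      have : p ^ L * p ≤ q * p := Nat.mul_le_mul_right p h
      omega
    rcases Nat.lt_or_ge (r + 1) p with hr1 | hr1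
    · -- no carry
      have hne : q * p + r + 1 ≠ p ^ (L + 1) := by
        intro h
        have h0 : (q * p + r + 1) % p = 0 := by
          rw [h, pow_succ]
          exact Nat.mul_mod_left _ p
        rw [show q * p + r + 1 = (r+1) + q * p by ring, Nat.add_mul_mod_self_right,
          Nat.mod_eq_of_lt hr1] at h0
        omega
      rw [if_neg hne]
      have e1 : q * p + r + 1 = q * p + (r + 1) := by ring
      rw [e1, Sfin_append hp0 L q (r+1) hr1, Sfin_append hp0 L q r hr,
        Pfin_append hp0 L q r hr]
      push_cast
      field_simp
      ring
    · -- carry: r = p - 1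
      have hrp : r = p - 1 := by omega
      have e1 : q * p + r + 1 = (q + 1) * p + 0 := by
        rw [add_mul, one_mul, hrp]; omega
      rw [e1]
      have hcond : ((q+1) * p + 0 = p ^ (L+1)) ↔ (q + 1 = p ^ L) := by
        rw [add_zero, pow_succ]
        exact ⟨fun h => Nat.eq_of_mul_eq_mul_right hp0 h, fun h => by rw [h]⟩
      have hrR : (r:ℝ) = (p:ℝ) - 1 := by
        rw [hrp, Nat.cast_pred hp0]
      have hRHS : Sfin p (L+1) (q*p+r) + Pfin p (L+1) (q*p+r) / Ap p ^ (L+1)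
          = Sfin p L q + Pfin p L q / Ap p ^ L := by
        rw [Sfin_append hp0 L q r hr, Pfin_append hp0 L q r hr, hrR, pow_succ]
        field_simp
        unfold Ap
        ring
      rw [hRHS, ← ih q hq]
      by_cases hc : q + 1 = p ^ L
      · rw [if_pos (hcond.mpr hc), if_pos hc]
      · rw [if_neg (fun h => hc (hcond.mp h)), if_neg hc]
        rw [Sfin_append hp0 L (q+1) 0 hp0]
        simp



noncomputable def fterm (p : ℕ) (x : ℝ) (j : ℕ) : ℝ :=
  ((bdig p x (j + 1) : ℝ) * ∏ i ∈ Finset.range (j + 1), ((bdig p x (i + 1) : ℝ) + 1))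
    / (Ap p) ^ (j + 1)

lemma phiP_eq (p : ℕ) (x : ℝ) (hx : x ≠ 1) :
    phiP p x = (1 / 2) * ∑' j : ℕ, fterm p x j := by
  rw [phiP, if_neg hx]; rfl

lemma bdig_nonneg {p : ℕ} (hp : 1 ≤ p) (t : ℝ) (j : ℕ) : 0 ≤ bdig p t (j + 1) := by
  unfold bdig
  have e : (p:ℝ) ^ (j+1) * t = (p:ℝ) * ((p:ℝ) ^ j * t) := by ring
  simp only [Nat.add_sub_cancel, e]
  have h1 : ((p:ℤ) * ⌊(p:ℝ)^j * t⌋ : ℤ) ≤ ⌊(p:ℝ) * ((p:ℝ)^j * t)⌋ := by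
    rw [Int.le_floor]
    push_cast
    have := Int.floor_le ((p:ℝ)^j * t)
    have hp0 : (0:ℝ) ≤ p := by positivity
    nlinarith
  omega

lemma bdig_le {p : ℕ} (hp : 1 ≤ p) (t : ℝ) (j : ℕ) : bdig p t (j + 1) ≤ (p:ℤ) - 1 := by
  unfold bdig
  have e : (p:ℝ) ^ (j+1) * t = (p:ℝ) * ((p:ℝ) ^ j * t) := by ring
  simp only [Nat.add_sub_cancel, e]
  have h1 : ⌊(p:ℝ) * ((p:ℝ)^j * t)⌋ < (p:ℤ) * ⌊(p:ℝ)^j * t⌋ + p := by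
    rw [Int.floor_lt]
    push_cast
    have := Int.lt_floor_add_one ((p:ℝ)^j * t)
    have hp0 : (1:ℝ) ≤ p := by exact_mod_cast hp
    nlinarith
  omega

lemma fterm_nonneg {p : ℕ} (hp : 1 ≤ p) (x : ℝ) (j : ℕ) : 0 ≤ fterm p x j := by
  have hA : 0 < Ap p := Ap_pos hp
  unfold fterm
  apply div_nonneg _ (by positivity)
  apply mul_nonneg
  · exact_mod_cast bdig_nonneg hp x j
  · apply Finset.prod_nonneg
    intro i _
    have h0 := bdig_nonneg hp x i
    have h0' : (0:ℝ) ≤ (bdig p x (i+1) : ℝ) := by exact_mod_cast h0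
    linarith

lemma fterm_le {p : ℕ} (hp : 1 ≤ p) (x : ℝ) (j : ℕ) :
    fterm p x j ≤ ((p:ℝ) - 1) * ((p:ℝ) / Ap p) ^ (j + 1) := by
  have hA : 0 < Ap p := Ap_pos hp
  have hb : ∀ i : ℕ, (0:ℝ) ≤ (bdig p x (i+1) : ℝ) ∧ ((bdig p x (i+1) : ℝ)) ≤ (p:ℝ) - 1 := by
    intro i
    constructor
    · exact_mod_cast bdig_nonneg hp x i
    · exact_mod_cast bdig_le hp x i
  unfold fterm
  rw [div_pow, mul_div_assoc', div_le_div_iff₀ (by positivity) (by positivity)]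
  have hprod : ∏ i ∈ Finset.range (j+1), ((bdig p x (i + 1) : ℝ) + 1) ≤ (p:ℝ) ^ (j+1) := by
    calc ∏ i ∈ Finset.range (j+1), ((bdig p x (i + 1) : ℝ) + 1)
        ≤ ∏ i ∈ Finset.range (j+1), (p:ℝ) := by
          apply Finset.prod_le_prod
          · intro i _; linarith [(hb i).1]
          · intro i _; linarith [(hb i).2]
      _ = (p:ℝ) ^ (j+1) := by rw [Finset.prod_const, Finset.card_range]
  have hbj := hb j
  have hprod0 : 0 ≤ ∏ i ∈ Finset.range (j+1), ((bdig p x (i + 1) : ℝ) + 1) :=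
    Finset.prod_nonneg fun i _ => by linarith [(hb i).1]
  calc (bdig p x (j+1) : ℝ) * (∏ i ∈ Finset.range (j+1), ((bdig p x (i + 1) : ℝ) + 1)) * Ap p ^ (j+1)
      ≤ ((p:ℝ) - 1) * (p:ℝ) ^ (j+1) * Ap p ^ (j+1) := by
        apply mul_le_mul_of_nonneg_right _ (by positivity)
        apply mul_le_mul hbj.2 hprod hprod0 (by linarith [hbj.1, hbj.2])
    _ = ((p:ℝ) - 1) * ((p:ℝ) ^ (j+1) * Ap p ^ (j+1)) := by ring
    _ = ((p:ℝ) - 1) * ((p:ℝ) ^ (j+1)) * Ap p ^ (j+1) := by ring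

lemma r_lt_one {p : ℕ} (hp : 3 ≤ p) : (p:ℝ) / Ap p < 1 := by
  have hpR : (3:ℝ) ≤ p := by exact_mod_cast hp
  have hA : 0 < Ap p := Ap_pos (by omega)
  rw [div_lt_one hA]
  unfold Ap
  nlinarith

lemma r_nonneg {p : ℕ} (hp : 3 ≤ p) : 0 ≤ (p:ℝ) / Ap p := by
  have hA : 0 < Ap p := Ap_pos (by omega)
  positivity

lemma summable_g {p : ℕ} (hp : 3 ≤ p) :
    Summable (fun j : ℕ => ((p:ℝ) - 1) * ((p:ℝ) / Ap p) ^ (j + 1)) := by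
  have e : (fun j : ℕ => ((p:ℝ) - 1) * ((p:ℝ) / Ap p) ^ (j + 1))
      = fun j => (((p:ℝ) - 1) * ((p:ℝ) / Ap p)) * ((p:ℝ) / Ap p) ^ j := by
    funext j; rw [pow_succ]; ring
  rw [e]
  exact (summable_geometric_of_lt_one (r_nonneg hp) (r_lt_one hp)).mul_left _

lemma summable_fterm {p : ℕ} (hp : 3 ≤ p) (x : ℝ) : Summable (fterm p x) :=
  Summable.of_nonneg_of_le (fterm_nonneg (by omega) x) (fterm_le (by omega) x) (summable_g hp)

lemma tsum_fterm_le {p : ℕ} (hp : 3 ≤ p) (x : ℝ) : ∑' j, fterm p x j ≤ 2 := by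
  have hpR : (3:ℝ) ≤ p := by exact_mod_cast hp
  have hA : 0 < Ap p := Ap_pos (by omega)
  have h1 : ∑' j, fterm p x j ≤ ∑' j : ℕ, ((p:ℝ) - 1) * ((p:ℝ) / Ap p) ^ (j + 1) :=
    Summable.tsum_le_tsum (fterm_le (by omega) x) (summable_fterm hp x) (summable_g hp)
  have h2 : ∑' j : ℕ, ((p:ℝ) - 1) * ((p:ℝ) / Ap p) ^ (j + 1) = 2 := by
    rw [tsum_mul_left]
    have h3 : ∑' j : ℕ, ((p:ℝ) / Ap p) ^ (j + 1)
        = ((p:ℝ)/Ap p) * ∑' j : ℕ, ((p:ℝ) / Ap p) ^ j := by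
      rw [← tsum_mul_left]
      exact tsum_congr fun j => by rw [pow_succ, mul_comm]
    rw [h3, tsum_geometric_of_lt_one (r_nonneg hp) (r_lt_one hp)]
    unfold Ap
    have hp1 : (p:ℝ) + 1 ≠ 0 := by linarith
    have hpm1 : (p:ℝ) - 1 ≠ 0 := by linarith
    have hp0 : (p:ℝ) ≠ 0 := by linarith
    field_simp
    have hne : -(p:ℝ) + (p:ℝ)^2 ≠ 0 := by nlinarith
    have hcc := mul_inv_cancel₀ hne
    rw [show (p:ℝ) + 1 - 2 = (p:ℝ) - 1 by ring, div_self hpm1]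
  linarith

lemma phi_nonneg {p : ℕ} (hp : 3 ≤ p) (x : ℝ) : 0 ≤ phiP p x := by
  by_cases hx : x = 1
  · simp [phiP, hx]
  · rw [phiP_eq p x hx]
    have : 0 ≤ ∑' j, fterm p x j := tsum_nonneg (fterm_nonneg (show 1 ≤ p by omega) x)
    linarith

lemma phi_le_one {p : ℕ} (hp : 3 ≤ p) (x : ℝ) : phiP p x ≤ 1 := by
  by_cases hx : x = 1
  · simp [phiP, hx]
  · rw [phiP_eq p x hx]
    have := tsum_fterm_le hp x
    linarith

lemma phi_zero {p : ℕ} (hp : 3 ≤ p) : phiP p 0 = 0 := by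
  rw [phiP_eq p 0 (by norm_num)]
  have : ∀ j : ℕ, fterm p 0 j = 0 := by
    intro j
    unfold fterm bdig
    simp
  rw [tsum_congr this]
  simp


lemma floor_rep {p : ℕ} (hp : 1 ≤ p) (L N : ℕ) {t : ℝ} (ht0 : 0 ≤ t) (ht1 : t < 1)
    {j : ℕ} (hj : j ≤ L) :
    ⌊(p:ℝ)^j * (((N:ℝ) + t)/(p:ℝ)^L)⌋ = (N / p^(L-j) : ℕ) := by
  have hpR : (1:ℝ) ≤ (p:ℝ) := by exact_mod_cast hp
  have hP0 : 0 < p ^ (L - j) := pow_pos (by omega) _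
  have hPR : (0:ℝ) < ((p ^ (L-j) : ℕ):ℝ) := by exact_mod_cast hP0
  have e : (p:ℝ)^j * (((N:ℝ) + t)/(p:ℝ)^L) = ((N:ℝ) + t)/((p ^ (L-j) : ℕ):ℝ) := by
    have hL : (p:ℝ)^L = (p:ℝ)^j * ((p ^ (L-j) : ℕ):ℝ) := by
      push_cast
      rw [← pow_add]
      congr 1
      omega
    rw [hL]
    have hpj : (p:ℝ)^j ≠ 0 := by positivity
    field_simp
  set q := N / p ^ (L - j) with hq
  rw [e, Int.floor_eq_iff]
  have hdm : p ^ (L-j) * q + N % p ^ (L-j) = N := Nat.div_add_mod N _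
  have hmlt : N % p ^ (L-j) < p ^ (L-j) := Nat.mod_lt _ hP0
  constructor
  · rw [le_div_iff₀ hPR]
    have h1 : p ^ (L-j) * q ≤ N := Nat.le.intro hdm
    have hc : ((p ^ (L-j) : ℕ):ℝ) * (q:ℝ) ≤ (N:ℝ) := by exact_mod_cast h1
    push_cast
    push_cast at hc
    linarith
  · rw [div_lt_iff₀ hPR]
    have h1 : N + 1 ≤ p ^ (L-j) * q + p ^ (L-j) := by
      rw [← hdm, add_assoc]
      exact Nat.add_le_add_left (Nat.succ_le_of_lt hmlt) _
    have hc : (N:ℝ) + 1 ≤ ((p ^ (L-j):ℕ):ℝ) * (q:ℝ) + ((p ^ (L-j):ℕ):ℝ) := by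
      exact_mod_cast h1
    push_cast
    push_cast at hc
    linarith

lemma floor_rep2 {p : ℕ} (hp : 1 ≤ p) (L N : ℕ) (t : ℝ) (j : ℕ) :
    ⌊(p:ℝ)^(L+j) * (((N:ℝ) + t)/(p:ℝ)^L)⌋ = (N:ℤ) * (p:ℤ)^j + ⌊(p:ℝ)^j * t⌋ := by
  have hpR : (1:ℝ) ≤ (p:ℝ) := by exact_mod_cast hp
  have hpL : (0:ℝ) < (p:ℝ)^L := by positivity
  have e : (p:ℝ)^(L+j) * (((N:ℝ) + t)/(p:ℝ)^L) = (p:ℝ)^j * t + ((N * p^j : ℕ):ℝ) := by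
    rw [pow_add]
    push_cast
    field_simp
    ring
  rw [e, Int.floor_add_natCast]
  push_cast
  ring

lemma bdig_rep_low {p : ℕ} (hp : 1 ≤ p) (L N : ℕ) {t : ℝ} (ht0 : 0 ≤ t) (ht1 : t < 1)
    {j : ℕ} (hj1 : 1 ≤ j) (hjL : j ≤ L) :
    bdig p (((N:ℝ) + t)/(p:ℝ)^L) j = (dig p L N j : ℤ) := by
  unfold bdig
  rw [floor_rep hp L N ht0 ht1 hjL, floor_rep hp L N ht0 ht1 (show j - 1 ≤ L by omega)]
  unfold dig
  have e1 : L - (j-1) = (L - j) + 1 := by omega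
  rw [e1, pow_succ, ← Nat.div_div_eq_div_mul]
  have hdm := Nat.mod_add_div (N / p ^ (L-j)) p
  omega

lemma bdig_rep_high {p : ℕ} (hp : 1 ≤ p) (L N : ℕ) (t : ℝ) (j : ℕ) :
    bdig p (((N:ℝ) + t)/(p:ℝ)^L) (L + (j+1)) = bdig p t (j+1) := by
  unfold bdig
  have e1 : L + (j + 1) - 1 = L + j := by omega
  have e2 : j + 1 - 1 = j := by omega
  rw [e1, e2, floor_rep2 hp L N t (j+1), floor_rep2 hp L N t j]
  push_cast [pow_succ]
  ring

lemma phi_rep {p : ℕ} (hp : 3 ≤ p) (L N : ℕ) (hN : N < p ^ L) :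
    ∀ t : ℝ, 0 ≤ t → t ≤ 1 →
    phiP p (((N:ℝ) + t)/(p:ℝ)^L) = Sfin p L N + Pfin p L N / (Ap p)^L * phiP p t := by
  have hp1 : 1 ≤ p := by omega
  have hpR : (1:ℝ) ≤ (p:ℝ) := by exact_mod_cast hp1
  have hA : 0 < Ap p := Ap_pos hp1
  have main : ∀ (N' : ℕ), N' < p ^ L → ∀ t : ℝ, 0 ≤ t → t < 1 →
      phiP p (((N':ℝ) + t)/(p:ℝ)^L) = Sfin p L N' + Pfin p L N' / (Ap p)^L * phiP p t := by
    intro N hN t ht0 ht1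
    have hpL : (0:ℝ) < (p:ℝ)^L := by positivity
    set x := ((N:ℝ) + t)/(p:ℝ)^L with hx
    have hxlt : x < 1 := by
      rw [hx, div_lt_one hpL]
      have : ((N:ℝ) + 1) ≤ (p:ℝ)^L := by exact_mod_cast Nat.add_one_le_iff.mpr hN
      linarith
    have hx1 : x ≠ 1 := ne_of_lt hxlt
    rw [phiP_eq p x hx1, phiP_eq p t (ne_of_lt ht1)]
    have hsum := summable_fterm hp x
    rw [← Summable.sum_add_tsum_nat_add L hsum]
    have hlow : ∀ j ∈ Finset.range L, fterm p x j
        = ((dig p L N (j+1) : ℝ) * ∏ i ∈ Finset.range (j+1), ((dig p L N (i+1):ℝ) + 1))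
            / (Ap p)^(j+1) := by
      intro j hj
      have hjL : j + 1 ≤ L := Finset.mem_range.mp hj
      unfold fterm
      rw [bdig_rep_low hp1 L N ht0 ht1 (by omega) hjL]
      congr 2
      refine Finset.prod_congr rfl fun i hi => ?_
      have hiL : i < j + 1 := Finset.mem_range.mp hi
      rw [bdig_rep_low hp1 L N ht0 ht1 (by omega) (by omega)]
      norm_cast
    have hhigh : ∀ j : ℕ, fterm p x (j + L) = Pfin p L N / (Ap p)^L * fterm p t j := by
      intro j
      unfold fterm
      have e1 : j + L + 1 = L + (j + 1) := by omega
      rw [e1]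
      have eb : bdig p x (L + (j+1)) = bdig p t (j+1) := bdig_rep_high hp1 L N t j
      have eprod : ∏ i ∈ Finset.range (L + (j+1)), ((bdig p x (i+1) : ℝ) + 1)
          = Pfin p L N * ∏ i ∈ Finset.range (j+1), ((bdig p t (i+1) : ℝ) + 1) := by
        rw [Finset.prod_range_add]
        congr 1
        · unfold Pfin
          refine Finset.prod_congr rfl fun i hi => ?_
          have hiL : i < L := Finset.mem_range.mp hi
          rw [bdig_rep_low hp1 L N ht0 ht1 (by omega) (by omega)]
          norm_cast
        · refine Finset.prod_congr rfl fun i hi => ?_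
          have e2 : L + i + 1 = L + (i + 1) := by omega
          rw [e2, bdig_rep_high hp1 L N t i]
      rw [eb, eprod, pow_add]
      field_simp
    rw [Finset.sum_congr rfl hlow, tsum_congr hhigh, tsum_mul_left]
    unfold Sfin
    ring
  intro t ht0 ht1
  rcases lt_or_eq_of_le ht1 with ht1' | rfl
  · exact main N hN t ht0 ht1'
  · -- t = 1
    have h1 : phiP p (1:ℝ) = 1 := by simp [phiP]
    rw [h1, mul_one]
    by_cases hc : N + 1 = p ^ L
    · have hx1 : ((N:ℝ) + 1)/(p:ℝ)^L = 1 := by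
        have : ((N:ℝ) + 1) = (p:ℝ)^L := by exact_mod_cast hc
        rw [this]
        field_simp
      rw [hx1, h1]
      have := Shat_succ hp L N hN
      rw [if_pos hc] at this
      linarith [this]
    · have hlt : N + 1 < p ^ L := by omega
      have e0 : ((N:ℝ) + 1)/(p:ℝ)^L = (((N+1 : ℕ):ℝ) + 0)/(p:ℝ)^L := by push_cast; ring_nf
      rw [e0, main (N+1) hlt 0 le_rfl (by norm_num), phi_zero hp]
      have := Shat_succ hp L N hN
      rw [if_neg hc] at this
      rw [← this]
      ring

def nk (p m : ℕ) : ℕ → ℕ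
  | 0 => m
  | k+1 => nk p m k * p + (p-1)/2

lemma nk_zero (p m : ℕ) : nk p m 0 = m := rfl
lemma nk_succ (p m k : ℕ) : nk p m (k+1) = nk p m k * p + (p-1)/2 := rfl

lemma nk_lt {p m M : ℕ} (hp : 3 ≤ p) (hm : m < p ^ M) (k : ℕ) : nk p m k < p ^ (M + k) := by
  induction k with
  | zero => simpa [nk_zero] using hm
  | succ k ih =>
    show nk p m k * p + (p-1)/2 < p ^ (M + (k+1))
    have h1 : (nk p m k + 1) * p ≤ p ^ (M+k) * p :=
      Nat.mul_le_mul_right p (Nat.add_one_le_iff.mpr ih)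
    have h2 : p ^ (M + (k+1)) = p ^ (M+k) * p := by rw [← add_assoc, pow_succ]
    have h3 : (p-1)/2 < p := by omega
    nlinarith [h1, h2, h3]

lemma c_cast {p : ℕ} (hodd : Odd p) (hp : 3 ≤ p) : (((p-1)/2 : ℕ) : ℝ) = ((p:ℝ) - 1)/2 := by
  obtain ⟨l, hl⟩ := hodd
  have : (p - 1)/2 = l := by omega
  rw [this]
  have : (p:ℝ) = 2*l + 1 := by exact_mod_cast hl
  rw [this]
  ring

lemma nk_cast {p m : ℕ} (hodd : Odd p) (hp : 3 ≤ p) (k : ℕ) :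
    ((nk p m k : ℕ) : ℝ) = (m:ℝ) * (p:ℝ)^k + ((p:ℝ)^k - 1)/2 := by
  induction k with
  | zero => simp [nk_zero]
  | succ k ih =>
    rw [nk_succ]
    push_cast
    rw [ih, c_cast hodd hp]
    push_cast
    ring

lemma theta_rep {p m M : ℕ} (hodd : Odd p) (hp : 3 ≤ p) (k : ℕ) (t : ℝ) :
    thetaP p m M k t = (((nk p m k : ℕ):ℝ) + t) / (p:ℝ)^(M+k) := by
  have hpR : (3:ℝ) ≤ (p:ℝ) := by exact_mod_cast hp
  have hp0 : (p:ℝ) ≠ 0 := by linarith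
  induction k generalizing t with
  | zero =>
    unfold thetaP
    simp [nk_zero]
    ring
  | succ k ih =>
    have hsum : thetaP p m M (k+1) t
        = thetaP p m M k ((((p:ℝ)-1)/2 + t)/(p:ℝ)) := by
      unfold thetaP
      rw [show M + (k+1) = (M+k) + 1 by omega, Finset.sum_Icc_succ_top (by omega : M+1 ≤ M+k+1)]
      have hpk : (p:ℝ)^(M+k) ≠ 0 := by positivity
      have hpk1 : (p:ℝ)^(M+k+1) = (p:ℝ)^(M+k) * (p:ℝ) := by rw [pow_succ]
      rw [hpk1]
      field_simp
      ring
    rw [hsum, ih]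
    show (((nk p m k : ℕ):ℝ) + (((p:ℝ)-1)/2 + t)/(p:ℝ)) / (p:ℝ)^(M+k)
        = (((nk p m k * p + (p-1)/2 : ℕ):ℝ) + t) / (p:ℝ)^(M+(k+1))
    push_cast [c_cast hodd hp]
    rw [show M + (k+1) = (M+k) + 1 by omega, pow_succ]
    field_simp
    ring

lemma mu_rep {p m M : ℕ} (hodd : Odd p) (hp : 3 ≤ p) (k : ℕ) :
    muP p m M = thetaP p m M k (1/2) := by
  have hpR : (3:ℝ) ≤ (p:ℝ) := by exact_mod_cast hp
  rw [theta_rep hodd hp k, nk_cast hodd hp]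
  unfold muP
  have h1 : (p:ℝ)^(M+k) = (p:ℝ)^M * (p:ℝ)^k := pow_add _ _ _
  have h2 : (p:ℝ)^M ≠ 0 := by positivity
  have h3 : (p:ℝ)^k ≠ 0 := by positivity
  rw [h1]
  field_simp
  ring

lemma Pfin_nk {p m M : ℕ} (hodd : Odd p) (hp : 3 ≤ p) (k : ℕ) :
    Pfin p (M+k) (nk p m k) = Pfin p M m * (((p:ℝ)+1)/2)^k := by
  induction k with
  | zero => simp [nk_zero]
  | succ k ih =>
    have hc : (p-1)/2 < p := by omega
    rw [show M+(k+1) = (M+k)+1 from rfl, nk_succ, Pfin_append (by omega) (M+k) (nk p m k) _ hc, ih]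
    have hcc : (((p-1)/2 : ℕ):ℝ) + 1 = ((p:ℝ)+1)/2 := by
      rw [c_cast hodd hp]; ring
    rw [hcc, pow_succ]
    ring

lemma tauM_eq {p m M : ℕ} : tauM p m M = Pfin p M m / (Ap p)^M := by
  unfold tauM Pfin
  congr 1
  rw [← Finset.Ico_add_one_right_eq_Icc, Finset.prod_Ico_eq_prod_range]
  refine Finset.prod_congr (by norm_num) fun i _ => by rw [show 1 + i = i + 1 by omega]; rfl

lemma key_identity {p m M : ℕ} (hodd : Odd p) (hp : 3 ≤ p) (hm : m < p ^ M) (k : ℕ)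
    {t : ℝ} (ht0 : 0 ≤ t) (ht1 : t ≤ 1) :
    phiP p (thetaP p m M k t)
      = Sfin p (M+k) (nk p m k) + tauM p m M / (p:ℝ)^k * phiP p t := by
  rw [theta_rep hodd hp k, phi_rep hp (M+k) (nk p m k) (nk_lt hp hm k) t ht0 ht1]
  congr 1
  rw [Pfin_nk hodd hp, tauM_eq]
  have hA : 0 < Ap p := Ap_pos (by omega)
  have hpR : (3:ℝ) ≤ (p:ℝ) := by exact_mod_cast hp
  have e : (Ap p)^(M+k) = (Ap p)^M * (Ap p)^k := pow_add _ _ _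
  have hApM : (Ap p)^M ≠ 0 := by positivity
  have hpk : (p:ℝ)^k ≠ 0 := by positivity
  have hq : (((p:ℝ)+1)/2)^k ≠ 0 := by positivity
  have hkey : (((p:ℝ)+1)/2)^k * (p:ℝ)^k = (Ap p)^k := by
    rw [← mul_pow]
    congr 1
    unfold Ap
    ring
  rw [e, ← hkey]
  field_simp

lemma Pfin_nonneg (p L N : ℕ) : 0 ≤ Pfin p L N := by
  unfold Pfin
  exact Finset.prod_nonneg fun i _ => by positivity

lemma tauM_nonneg {p m M : ℕ} (hp : 3 ≤ p) : 0 ≤ tauM p m M := by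
  rw [tauM_eq]
  have hA : 0 < Ap p := Ap_pos (by omega)
  exact div_nonneg (Pfin_nonneg p M m) (by positivity)

lemma lip_rpow {a b e : ℝ} (ha : 0 < a) (he : e ≤ 0) {x y : ℝ}
    (hx : x ∈ Set.Icc a b) (hy : y ∈ Set.Icc a b) :
    |x ^ e - y ^ e| ≤ (|e| * a ^ (e - 1)) * |x - y| := by
  have hconv : Convex ℝ (Set.Icc a b) := convex_Icc a b
  have hderiv : ∀ z ∈ Set.Icc a b, HasDerivWithinAt (fun w : ℝ => w ^ e)
      (e * z ^ (e - 1)) (Set.Icc a b) z := fun z hz =>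
    (Real.hasDerivAt_rpow_const (Or.inl (ne_of_gt (lt_of_lt_of_le ha hz.1)))).hasDerivWithinAt
  have hbound : ∀ z ∈ Set.Icc a b, ‖e * z ^ (e - 1)‖ ≤ |e| * a ^ (e - 1) := by
    intro z hz
    have hz0 : 0 < z := lt_of_lt_of_le ha hz.1
    rw [norm_mul, Real.norm_eq_abs, Real.norm_eq_abs,
      abs_of_nonneg (Real.rpow_nonneg hz0.le _)]
    apply mul_le_mul_of_nonneg_left _ (abs_nonneg e)
    exact Real.rpow_le_rpow_of_nonpos ha hz.1 (by linarith)
  have h := hconv.norm_image_sub_le_of_norm_hasDerivWithin_le hderiv hbound hy hx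
  simpa [Real.norm_eq_abs] using h

lemma taylor2 {a b ρ : ℝ} (ha : 0 < a) (hρ : 0 < ρ) {x μ : ℝ}
    (hx : x ∈ Set.Icc a b) (hμ : μ ∈ Set.Icc a b) :
    |x ^ (-ρ) - μ ^ (-ρ) + ρ * μ ^ (-ρ - 1) * (x - μ)|
      ≤ (ρ * ((ρ + 1) * a ^ (-ρ - 2))) * |x - μ| ^ 2 := by
  set s := Set.Icc (min μ x) (max μ x) with hs
  have hsub : s ⊆ Set.Icc a b :=
    Set.Icc_subset_Icc (le_min hμ.1 hx.1) (max_le hμ.2 hx.2)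
  have hconv : Convex ℝ s := convex_Icc _ _
  have hderiv : ∀ z ∈ s, HasDerivWithinAt
      (fun w : ℝ => w ^ (-ρ) + ρ * μ ^ (-ρ - 1) * w)
      (-ρ * z ^ (-ρ - 1) + ρ * μ ^ (-ρ - 1)) s z := by
    intro z hz
    have hz0 : (0:ℝ) < z := lt_of_lt_of_le ha (hsub hz).1
    have h1 : HasDerivAt (fun w : ℝ => w ^ (-ρ)) (-ρ * z ^ (-ρ - 1)) z := by
      have h := Real.hasDerivAt_rpow_const (x := z) (p := -ρ) (Or.inl (ne_of_gt hz0))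
      exact h
    have h2 : HasDerivAt (fun w : ℝ => ρ * μ ^ (-ρ - 1) * w)
        (ρ * μ ^ (-ρ - 1)) z := by
      simpa using (hasDerivAt_id z).const_mul (ρ * μ ^ (-ρ - 1))
    exact (h1.add h2).hasDerivWithinAt
  have hbound : ∀ z ∈ s, ‖-ρ * z ^ (-ρ - 1) + ρ * μ ^ (-ρ - 1)‖
      ≤ (ρ * ((ρ + 1) * a ^ (-ρ - 2))) * |x - μ| := by
    intro z hz
    have hzμ : |z - μ| ≤ |x - μ| := by
      rw [abs_le]
      have h1 : μ - |x - μ| ≤ min μ x :=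
        le_min (by linarith [abs_nonneg (x - μ)]) (by linarith [neg_abs_le (x - μ)])
      have h2 : max μ x ≤ μ + |x - μ| :=
        max_le (by linarith [abs_nonneg (x - μ)]) (by linarith [le_abs_self (x - μ)])
      constructor <;> [linarith [hz.1]; linarith [hz.2]]
    have hlip := lip_rpow ha (show -ρ - 1 ≤ 0 by linarith) (hsub hz) hμ
    have habs : |(-ρ - 1)| = ρ + 1 := by rw [abs_of_neg (by linarith)]; ring
    rw [habs] at hlip
    have he2 : -ρ - 1 - 1 = -ρ - 2 := by ring
    rw [he2] at hlip
    have : ‖-ρ * z ^ (-ρ - 1) + ρ * μ ^ (-ρ - 1)‖ = ρ * |z ^ (-ρ - 1) - μ ^ (-ρ - 1)| := by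
      rw [Real.norm_eq_abs, show -ρ * z ^ (-ρ - 1) + ρ * μ ^ (-ρ - 1)
        = -(ρ * (z ^ (-ρ - 1) - μ ^ (-ρ - 1))) by ring, abs_neg, abs_mul,
        abs_of_pos hρ]
    rw [this]
    calc ρ * |z ^ (-ρ - 1) - μ ^ (-ρ - 1)| ≤ ρ * (((ρ + 1) * a ^ (-ρ - 2)) * |z - μ|) :=
          mul_le_mul_of_nonneg_left hlip hρ.le
      _ ≤ ρ * (((ρ + 1) * a ^ (-ρ - 2)) * |x - μ|) := by
          apply mul_le_mul_of_nonneg_left _ hρ.le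
          apply mul_le_mul_of_nonneg_left hzμ
          positivity
      _ = (ρ * ((ρ + 1) * a ^ (-ρ - 2))) * |x - μ| := by ring
  have hxs : x ∈ s := ⟨min_le_right _ _, le_max_right _ _⟩
  have hμs : μ ∈ s := ⟨min_le_left _ _, le_max_left _ _⟩
  have h := hconv.norm_image_sub_le_of_norm_hasDerivWithin_le hderiv hbound hμs hxs
  rw [Real.norm_eq_abs, Real.norm_eq_abs] at h
  have e1 : (x ^ (-ρ) + ρ * μ ^ (-ρ - 1) * x) - (μ ^ (-ρ) + ρ * μ ^ (-ρ - 1) * μ)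
      = x ^ (-ρ) - μ ^ (-ρ) + ρ * μ ^ (-ρ - 1) * (x - μ) := by ring
  rw [e1] at h
  calc |x ^ (-ρ) - μ ^ (-ρ) + ρ * μ ^ (-ρ - 1) * (x - μ)|
      ≤ (ρ * ((ρ + 1) * a ^ (-ρ - 2))) * |x - μ| * |x - μ| := h
    _ = (ρ * ((ρ + 1) * a ^ (-ρ - 2))) * |x - μ| ^ 2 := by ring

end MGaux

set_option maxHeartbeats 1000000 in
open MGaux in
/-- For an odd prime `p`, `M ≥ 1`, `1 ≤ m < p^M`, there is `C > 0` such that for all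
`k ≥ 0` and `t ∈ [0,1]`:
`|p^k (G_p(θ_k(t)) − G_p(μ)) − μ^{−ρ_p−1} Q_μ(t)| ≤ C p^{−k}`. -/
theorem magnifying_G (p : ℕ) (hp : p.Prime) (hodd : Odd p) (M m : ℕ)
    (hM : 1 ≤ M) (hm1 : 1 ≤ m) (hm2 : m < p ^ M) :
    ∃ C : ℝ, 0 < C ∧ ∀ k : ℕ, ∀ t ∈ Set.Icc (0 : ℝ) 1,
      |(p : ℝ) ^ k * (Gp p (thetaP p m M k t) - Gp p (muP p m M))
          - muP p m M ^ (-(rhoP p) - 1) * Qmu p m M t| ≤ C / (p : ℝ) ^ k := by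
  have hp2 : p ≠ 2 := by
    rintro rfl
    exact (by decide : ¬ Odd 2) hodd
  have hp3 : 3 ≤ p := by
    have := hp.two_le
    omega
  have hpR : (3:ℝ) ≤ (p:ℝ) := by exact_mod_cast hp3
  have hp0R : (0:ℝ) < (p:ℝ) := by linarith
  have hA1 : 1 < Ap p := by unfold Ap; nlinarith
  have hρ : 0 < rhoP p :=
    div_pos (Real.log_pos hA1) (Real.log_pos (by linarith))
  set ρ := rhoP p with hρdef
  set μv := muP p m M with hμdef
  have hpM : (0:ℝ) < (p:ℝ)^M := by positivity
  set a : ℝ := (m:ℝ)/(p:ℝ)^M with hadef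
  set b : ℝ := ((m:ℝ)+1)/(p:ℝ)^M with hbdef
  have hm1R : (1:ℝ) ≤ (m:ℝ) := by exact_mod_cast hm1
  have hapos : 0 < a := by rw [hadef]; positivity
  have ha_eq : a = μv - (1/2)/(p:ℝ)^M := by
    rw [hadef, hμdef]; unfold muP; ring
  have hb_eq : b = μv + (1/2)/(p:ℝ)^M := by
    rw [hbdef, hμdef]; unfold muP; ring
  have hμmem : μv ∈ Set.Icc a b := by
    constructor
    · rw [ha_eq]
      have : (0:ℝ) < (1/2)/(p:ℝ)^M := by positivity
      linarith
    · rw [hb_eq]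
      have : (0:ℝ) < (1/2)/(p:ℝ)^M := by positivity
      linarith
  have hμ0 : 0 < μv := lt_of_lt_of_le hapos hμmem.1
  have hτ : 0 ≤ tauM p m M := tauM_nonneg hp3
  set K2 : ℝ := ρ * ((ρ + 1) * a ^ (-ρ - 2)) with hK2def
  set K1 : ℝ := ρ * a ^ (-ρ - 1) with hK1def
  have hK2 : 0 < K2 := by
    rw [hK2def]
    have := Real.rpow_pos_of_pos hapos (-ρ - 2)
    positivity
  have hK1 : 0 < K1 := by
    rw [hK1def]
    have := Real.rpow_pos_of_pos hapos (-ρ - 1)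
    positivity
  refine ⟨K2 + 2 * tauM p m M * K1 + 1, by positivity, ?_⟩
  intro k t ht
  have hpk : (0:ℝ) < (p:ℝ)^k := by positivity
  have hpMk : (0:ℝ) < (p:ℝ)^(M+k) := by positivity
  set θv := thetaP p m M k t with hθdef
  -- basic representations
  have hθv : θv = ((nk p m k : ℝ) + t)/(p:ℝ)^(M+k) := theta_rep hodd hp3 k t
  have hμv : μv = ((nk p m k : ℝ) + 1/2)/(p:ℝ)^(M+k) := by
    rw [hμdef, mu_rep hodd hp3 k, theta_rep hodd hp3 k]
  have hθμ : θv - μv = (t - 1/2)/(p:ℝ)^(M+k) := by rw [hθv, hμv]; ring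
  have hth : |t - 1/2| ≤ 1/2 := by
    rw [abs_le]; constructor <;> [linarith [ht.1]; linarith [ht.2]]
  have hpow_le : (p:ℝ)^M ≤ (p:ℝ)^(M+k) := by
    apply pow_le_pow_right₀ (by linarith)
    omega
  have hpow_le2 : (p:ℝ)^k ≤ (p:ℝ)^(M+k) := by
    apply pow_le_pow_right₀ (by linarith)
    omega
  have habs_h : |θv - μv| = |t - 1/2|/(p:ℝ)^(M+k) := by
    rw [hθμ, abs_div, abs_of_pos hpMk]
  have hhalf : |θv - μv| ≤ (1/2)/(p:ℝ)^M := by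
    rw [habs_h]
    exact div_le_div₀ (by norm_num) hth hpM hpow_le
  have hh1 : |θv - μv| ≤ ((p:ℝ)^k)⁻¹ := by
    rw [habs_h]
    calc |t - 1/2|/(p:ℝ)^(M+k) ≤ 1/(p:ℝ)^k :=
          div_le_div₀ (by norm_num) (by linarith) hpk hpow_le2
      _ = ((p:ℝ)^k)⁻¹ := one_div _
  have hh2 : (p:ℝ)^k * |θv - μv| ≤ 1 := by
    rw [habs_h, pow_add]
    have hne : (p:ℝ)^M ≠ 0 := ne_of_gt hpM
    have hne2 : (p:ℝ)^k ≠ 0 := ne_of_gt hpk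
    have e : (p:ℝ)^k * (|t - 1/2|/((p:ℝ)^M * (p:ℝ)^k)) = |t - 1/2|/(p:ℝ)^M := by
      field_simp
    rw [e]
    have hM1 : (1:ℝ) ≤ (p:ℝ)^M := one_le_pow₀ (by linarith)
    calc |t - 1/2|/(p:ℝ)^M ≤ (1/2)/1 := div_le_div₀ (by norm_num) hth one_pos hM1
      _ ≤ 1 := by norm_num
  have hθmem : θv ∈ Set.Icc a b := by
    have h1 := abs_le.mp hhalf
    constructor
    · rw [ha_eq]; linarith [h1.1]
    · rw [hb_eq]; linarith [h1.2]
  -- key identity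
  have hkt := key_identity hodd hp3 hm2 k ht.1 ht.2
  have hk2 := key_identity (t := 1/2) hodd hp3 hm2 k (by norm_num) (by norm_num)
  rw [← mu_rep hodd hp3 k] at hk2
  have A1 : (p:ℝ)^k * (phiP p θv - phiP p μv)
      = tauM p m M * (phiP p t - phiP p (1/2)) := by
    rw [hθdef, hkt, hμdef, hk2]
    field_simp
    ring
  have A2 : (p:ℝ)^k * (θv - μv) = (t - 1/2)/(p:ℝ)^M := by
    rw [hθμ, pow_add]
    field_simp
  have A3 : μv ^ (-ρ) = μv ^ (-ρ - 1) * μv := by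
    rw [← Real.rpow_add_one (ne_of_gt hμ0) (-ρ - 1)]
    congr 1
    ring
  set φμ := phiP p μv with hφμdef
  set Δ := phiP p t - phiP p (1/2) with hΔdef
  have heq : (p:ℝ)^k * (Gp p θv - Gp p μv) - μv ^ (-ρ - 1) * Qmu p m M t
      = φμ * ((p:ℝ)^k * (θv ^ (-ρ) - μv ^ (-ρ) + ρ * μv ^ (-ρ - 1) * (θv - μv)))
        + (tauM p m M * Δ) * (θv ^ (-ρ) - μv ^ (-ρ)) := by
    simp only [Gp, Qmu, ← hρdef, ← hμdef, ← hθdef, ← hφμdef, ← hΔdef]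
    linear_combination (θv ^ (-ρ)) * A1 - (ρ * μv ^ (-ρ - 1) * φμ) * A2
      + (tauM p m M * Δ) * A3
  rw [heq]
  -- bounds
  have hg := taylor2 hapos hρ hθmem hμmem
  have hXY := lip_rpow hapos (show -ρ ≤ 0 by linarith) hθmem hμmem
  have habsρ : |(-ρ)| = ρ := by rw [abs_neg, abs_of_pos hρ]
  rw [habsρ] at hXY
  have hφμ1 : |φμ| ≤ 1 := by
    rw [abs_le]
    exact ⟨by linarith [phi_nonneg hp3 μv], phi_le_one hp3 μv⟩
  have hΔ2 : |Δ| ≤ 2 := by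
    rw [hΔdef, abs_le]
    have h1 := phi_nonneg hp3 t
    have h2 := phi_le_one hp3 t
    have h3 := phi_nonneg hp3 (1/2 : ℝ)
    have h4 := phi_le_one hp3 (1/2 : ℝ)
    constructor <;> [linarith; linarith]
  have step1 : |φμ * ((p:ℝ)^k * (θv ^ (-ρ) - μv ^ (-ρ) + ρ * μv ^ (-ρ - 1) * (θv - μv)))
        + (tauM p m M * Δ) * (θv ^ (-ρ) - μv ^ (-ρ))|
      ≤ |φμ| * ((p:ℝ)^k * |θv ^ (-ρ) - μv ^ (-ρ) + ρ * μv ^ (-ρ - 1) * (θv - μv)|)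
        + (tauM p m M * |Δ|) * |θv ^ (-ρ) - μv ^ (-ρ)| := by
    calc |φμ * ((p:ℝ)^k * (θv ^ (-ρ) - μv ^ (-ρ) + ρ * μv ^ (-ρ - 1) * (θv - μv)))
        + (tauM p m M * Δ) * (θv ^ (-ρ) - μv ^ (-ρ))|
        ≤ |φμ * ((p:ℝ)^k * (θv ^ (-ρ) - μv ^ (-ρ) + ρ * μv ^ (-ρ - 1) * (θv - μv)))|
          + |(tauM p m M * Δ) * (θv ^ (-ρ) - μv ^ (-ρ))| := abs_add_le _ _
      _ = |φμ| * ((p:ℝ)^k * |θv ^ (-ρ) - μv ^ (-ρ) + ρ * μv ^ (-ρ - 1) * (θv - μv)|)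
          + (tauM p m M * |Δ|) * |θv ^ (-ρ) - μv ^ (-ρ)| := by
          rw [abs_mul, abs_mul, abs_mul, abs_mul, abs_of_pos hpk, abs_of_nonneg hτ]
  have hterm1 : |φμ| * ((p:ℝ)^k * |θv ^ (-ρ) - μv ^ (-ρ) + ρ * μv ^ (-ρ - 1) * (θv - μv)|)
      ≤ K2 * ((p:ℝ)^k)⁻¹ := by
    have h1 : (p:ℝ)^k * |θv ^ (-ρ) - μv ^ (-ρ) + ρ * μv ^ (-ρ - 1) * (θv - μv)|
        ≤ (p:ℝ)^k * (K2 * |θv - μv|^2) := mul_le_mul_of_nonneg_left hg hpk.le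
    have h2 : (p:ℝ)^k * (K2 * |θv - μv|^2) = K2 * (((p:ℝ)^k * |θv - μv|) * |θv - μv|) := by
      ring
    have h3 : ((p:ℝ)^k * |θv - μv|) * |θv - μv| ≤ 1 * ((p:ℝ)^k)⁻¹ :=
      mul_le_mul hh2 hh1 (abs_nonneg _) one_pos.le
    have h4 : |φμ| * ((p:ℝ)^k * |θv ^ (-ρ) - μv ^ (-ρ) + ρ * μv ^ (-ρ - 1) * (θv - μv)|)
        ≤ 1 * ((p:ℝ)^k * |θv ^ (-ρ) - μv ^ (-ρ) + ρ * μv ^ (-ρ - 1) * (θv - μv)|) := by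
      apply mul_le_mul_of_nonneg_right hφμ1
      positivity
    calc |φμ| * ((p:ℝ)^k * |θv ^ (-ρ) - μv ^ (-ρ) + ρ * μv ^ (-ρ - 1) * (θv - μv)|)
        ≤ (p:ℝ)^k * |θv ^ (-ρ) - μv ^ (-ρ) + ρ * μv ^ (-ρ - 1) * (θv - μv)| :=
          le_trans h4 (le_of_eq (one_mul _))
      _ ≤ (p:ℝ)^k * (K2 * |θv - μv|^2) := h1
      _ = K2 * (((p:ℝ)^k * |θv - μv|) * |θv - μv|) := h2
      _ ≤ K2 * (1 * ((p:ℝ)^k)⁻¹) := mul_le_mul_of_nonneg_left h3 hK2.le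
      _ = K2 * ((p:ℝ)^k)⁻¹ := by ring
  have hterm2 : (tauM p m M * |Δ|) * |θv ^ (-ρ) - μv ^ (-ρ)|
      ≤ 2 * tauM p m M * K1 * ((p:ℝ)^k)⁻¹ := by
    have h1 : |θv ^ (-ρ) - μv ^ (-ρ)| ≤ K1 * ((p:ℝ)^k)⁻¹ := by
      calc |θv ^ (-ρ) - μv ^ (-ρ)| ≤ ρ * a ^ (-ρ - 1) * |θv - μv| := hXY
        _ ≤ ρ * a ^ (-ρ - 1) * ((p:ℝ)^k)⁻¹ :=
            mul_le_mul_of_nonneg_left hh1 (mul_nonneg hρ.le (Real.rpow_nonneg hapos.le _))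
        _ = K1 * ((p:ℝ)^k)⁻¹ := by rw [hK1def]
    have h2 : tauM p m M * |Δ| ≤ tauM p m M * 2 := mul_le_mul_of_nonneg_left hΔ2 hτ
    calc (tauM p m M * |Δ|) * |θv ^ (-ρ) - μv ^ (-ρ)|
        ≤ (tauM p m M * 2) * (K1 * ((p:ℝ)^k)⁻¹) := by
          apply mul_le_mul h2 h1 (abs_nonneg _)
          positivity
      _ = 2 * tauM p m M * K1 * ((p:ℝ)^k)⁻¹ := by ring
  have hfin : (K2 + 2 * tauM p m M * K1 + 1) / (p:ℝ)^k
      = (K2 + 2 * tauM p m M * K1 + 1) * ((p:ℝ)^k)⁻¹ := div_eq_mul_inv _ _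
  rw [hfin]
  have hinv : 0 < ((p:ℝ)^k)⁻¹ := by positivity
  calc |φμ * ((p:ℝ)^k * (θv ^ (-ρ) - μv ^ (-ρ) + ρ * μv ^ (-ρ - 1) * (θv - μv)))
        + (tauM p m M * Δ) * (θv ^ (-ρ) - μv ^ (-ρ))|
      ≤ |φμ| * ((p:ℝ)^k * |θv ^ (-ρ) - μv ^ (-ρ) + ρ * μv ^ (-ρ - 1) * (θv - μv)|)
        + (tauM p m M * |Δ|) * |θv ^ (-ρ) - μv ^ (-ρ)| := step1
    _ ≤ K2 * ((p:ℝ)^k)⁻¹ + 2 * tauM p m M * K1 * ((p:ℝ)^k)⁻¹ := add_le_add hterm1 hterm2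
    _ ≤ (K2 + 2 * tauM p m M * K1 + 1) * ((p:ℝ)^k)⁻¹ := by
        have he : (K2 + 2 * tauM p m M * K1 + 1) * ((p:ℝ)^k)⁻¹
            = K2 * ((p:ℝ)^k)⁻¹ + 2 * tauM p m M * K1 * ((p:ℝ)^k)⁻¹ + ((p:ℝ)^k)⁻¹ := by
          ring
        rw [he]
        linarith [hinv]
end
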